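/- arXiv:2402.00377 — 7 statements merged into one kernel-verified Lean document; each statement's English description precedes it below -/
import Mathlib

section
/- For every u, v ∈ ℝⁿ one has h(u∘v) + (μ/2)(‖u‖² + ‖v‖²) ≥ h(u∘v) + μ‖u∘v‖₁, where u∘v denotes the entrywise product; consequently, the infimum over (u,v) ∈ ℝⁿ×ℝⁿ of G(u,v) := h(u∘v) + (μ/2)(‖u‖² + ‖v‖²) equals the infimum over x ∈ ℝⁿ of f(x) := h(x) + μ‖x‖₁. -/
open scoped BigOperators

private lemma eucl_norm_sq {n : ℕ} (x : EuclideanSpace ℝ (Fin n)) :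
    ‖x‖ ^ 2 = ∑ i, x i ^ 2 := by
  rw [EuclideanSpace.norm_eq, Real.sq_sqrt (by positivity)]
  simp [sq_abs]

/-- For every `u, v ∈ ℝⁿ`,
`h(u∘v) + (μ/2)(‖u‖² + ‖v‖²) ≥ h(u∘v) + μ‖u∘v‖₁`, and consequently
`inf G = inf f` where `G(u,v) = h(u∘v) + (μ/2)(‖u‖² + ‖v‖²)` and
`f(x) = h(x) + μ‖x‖₁`. -/
theorem stmt0 (n : ℕ) (hn : 0 < n)
    (h : EuclideanSpace ℝ (Fin n) → ℝ) (hh : ContDiff ℝ 2 h)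
    (μ : ℝ) (hμ : 0 < μ)
    (G : EuclideanSpace ℝ (Fin n) × EuclideanSpace ℝ (Fin n) → ℝ)
    (hG : G = fun p => h (WithLp.toLp 2 (fun i => p.1 i * p.2 i)) + μ / 2 * (‖p.1‖ ^ 2 + ‖p.2‖ ^ 2))
    (f : EuclideanSpace ℝ (Fin n) → ℝ)
    (hf : f = fun x => h x + μ * ∑ i, |x i|) :
    (∀ u v : EuclideanSpace ℝ (Fin n),
        G (u, v) ≥ h (WithLp.toLp 2 (fun i => u i * v i)) + μ * ∑ i, |u i * v i|) ∧
    (⨅ p : EuclideanSpace ℝ (Fin n) × EuclideanSpace ℝ (Fin n), G p) =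
      (⨅ x : EuclideanSpace ℝ (Fin n), f x) := by
  have part1 : ∀ u v : EuclideanSpace ℝ (Fin n),
      G (u, v) ≥ h (WithLp.toLp 2 (fun i => u i * v i)) + μ * ∑ i, |u i * v i| := by
    intro u v
    rw [hG]
    simp only
    have hsum : ∑ i, |u i * v i| ≤ 1 / 2 * (‖u‖ ^ 2 + ‖v‖ ^ 2) := by
      rw [eucl_norm_sq, eucl_norm_sq, ← Finset.sum_add_distrib, Finset.mul_sum]
      refine Finset.sum_le_sum fun i _ => ?_
      have := abs_nonneg (u i * v i)
      nlinarith [sq_nonneg (|u i| - |v i|), sq_abs (u i), sq_abs (v i),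
        abs_mul (u i) (v i), abs_nonneg (u i), abs_nonneg (v i)]
    have : μ * ∑ i, |u i * v i| ≤ μ / 2 * (‖u‖ ^ 2 + ‖v‖ ^ 2) := by
      calc μ * ∑ i, |u i * v i| ≤ μ * (1 / 2 * (‖u‖ ^ 2 + ‖v‖ ^ 2)) :=
            mul_le_mul_of_nonneg_left hsum hμ.le
        _ = μ / 2 * (‖u‖ ^ 2 + ‖v‖ ^ 2) := by ring
    linarith
  refine ⟨part1, ?_⟩
  -- (A): every value of G dominates some value of f
  have hA : ∀ p, ∃ x, f x ≤ G p := by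
    intro p
    refine ⟨WithLp.toLp 2 (fun i => p.1 i * p.2 i), ?_⟩
    have := part1 p.1 p.2
    rw [hf]
    simpa using this
  -- (B): every value of f is attained by G
  have hB : ∀ x, ∃ p, G p = f x := by
    intro x
    refine ⟨((WithLp.equiv 2 _).symm (fun i => Real.sign (x i) * Real.sqrt |x i|),
            (WithLp.equiv 2 _).symm (fun i => Real.sqrt |x i|)), ?_⟩
    rw [hG, hf]
    simp only [WithLp.equiv_symm_apply, WithLp.ofLp_toLp]
    have hsgn : ∀ a : ℝ, Real.sign a * |a| = a := by
      intro a
      rcases lt_trichotomy a 0 with hlt | heq | hgt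
      · rw [Real.sign_of_neg hlt, abs_of_neg hlt]; ring
      · simp [heq]
      · rw [Real.sign_of_pos hgt, abs_of_pos hgt]; ring
    have hx : (fun i => (Real.sign (x i) * Real.sqrt |x i|) * Real.sqrt |x i|) = x := by
      funext i
      rw [mul_assoc, Real.mul_self_sqrt (abs_nonneg _), hsgn]
    have hnv : ‖((WithLp.equiv 2 _).symm (fun i => Real.sqrt |x i|) :
        EuclideanSpace ℝ (Fin n))‖ ^ 2 = ∑ i, |x i| := by
      rw [EuclideanSpace.norm_eq, Real.sq_sqrt (by positivity)]
      refine Finset.sum_congr rfl fun i _ => ?_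
      simp [sq, Real.mul_self_sqrt (abs_nonneg _)]
    have hnu : ‖((WithLp.equiv 2 _).symm (fun i => Real.sign (x i) * Real.sqrt |x i|) :
        EuclideanSpace ℝ (Fin n))‖ ^ 2 = ∑ i, |x i| := by
      rw [EuclideanSpace.norm_eq, Real.sq_sqrt (by positivity)]
      refine Finset.sum_congr rfl fun i _ => ?_
      simp only [WithLp.equiv_symm_apply, WithLp.ofLp_toLp, Real.norm_eq_abs, sq_abs]
      rcases lt_trichotomy (x i) 0 with hlt | heq | hgt
      · rw [Real.sign_of_neg hlt, mul_pow, neg_one_sq, one_mul, sq,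
          Real.mul_self_sqrt (abs_nonneg _)]
      · simp [heq]
      · rw [Real.sign_of_pos hgt, mul_pow, one_pow, one_mul, sq,
          Real.mul_self_sqrt (abs_nonneg _)]
    rw [WithLp.equiv_symm_apply] at hnu hnv
    rw [hx, WithLp.toLp_ofLp, hnu, hnv]
    ring
  -- infima equal
  have hne1 : (Set.range G).Nonempty := Set.range_nonempty _
  have hne2 : (Set.range f).Nonempty := Set.range_nonempty _
  have hlb : lowerBounds (Set.range G) = lowerBounds (Set.range f) := by
    ext b
    constructor
    · intro hb y ⟨x, hx⟩
      obtain ⟨p, hp⟩ := hB x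
      rw [← hx, ← hp]
      exact hb ⟨p, rfl⟩
    · intro hb y ⟨p, hp⟩
      obtain ⟨x, hx⟩ := hA p
      exact le_trans (hb ⟨x, rfl⟩) (hp ▸ hx)
  show sInf (Set.range G) = sInf (Set.range f)
  by_cases hbdd : BddBelow (Set.range f)
  · have hbddG : BddBelow (Set.range G) := by
      obtain ⟨b, hb⟩ := hbdd
      exact ⟨b, hlb ▸ hb⟩
    apply le_antisymm
    · refine le_csInf hne2 fun y ⟨x, hx⟩ => ?_
      obtain ⟨p, hp⟩ := hB x
      rw [← hx, ← hp]
      exact csInf_le hbddG ⟨p, rfl⟩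
    · refine le_csInf hne1 fun y ⟨p, hp⟩ => ?_
      obtain ⟨x, hx⟩ := hA p
      exact csInf_le_of_le hbdd ⟨x, rfl⟩ (hp ▸ hx)
  · have hbddG : ¬ BddBelow (Set.range G) := by
      intro ⟨b, hb⟩
      exact hbdd ⟨b, hlb ▸ hb⟩
    rw [Real.sInf_of_not_bddBelow hbddG, Real.sInf_of_not_bddBelow hbdd]
end

section
/- The function F is twice continuously differentiable, and for every (a,b) ∈ ℝⁿ×ℝⁿ and every direction (u,v) ∈ ℝⁿ×ℝⁿ, the second derivative quadratic form of F at (a,b) satisfies D²F(a,b)[(u,v),(u,v)] = 4⟨a∘u − b∘v, ∇²h(s)(a∘u − b∘v)⟩ + 2Σᵢ[(∇h(s)ᵢ + μ)uᵢ² + (μ − ∇h(s)ᵢ)vᵢ²], where s = a² − b² and ∘ denotes the entrywise product. -/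
open scoped BigOperators

/-- `F` is twice continuously differentiable and its second derivative
quadratic form satisfies
`D²F(a,b)[(u,v),(u,v)] = 4⟨a∘u − b∘v, ∇²h(s)(a∘u − b∘v)⟩
  + 2Σᵢ[(∇h(s)ᵢ + μ)uᵢ² + (μ − ∇h(s)ᵢ)vᵢ²]`, where `s = a² − b²`.
The Hessian quadratic form `⟨w, ∇²h(s)w⟩` is expressed as the second iterated
derivative of `h` at `s` in direction `(w, w)`. -/
theorem stmt3 (n : ℕ) (hn : 0 < n)
    (h : EuclideanSpace ℝ (Fin n) → ℝ) (hh : ContDiff ℝ 2 h)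
    (μ : ℝ) (hμ : 0 < μ)
    (F : EuclideanSpace ℝ (Fin n) × EuclideanSpace ℝ (Fin n) → ℝ)
    (hF : F = fun p =>
      h (WithLp.toLp 2 (fun i => p.1 i ^ 2 - p.2 i ^ 2)) + μ * ∑ i, (p.1 i ^ 2 + p.2 i ^ 2)) :
    ContDiff ℝ 2 F ∧
    ∀ (a b u v : EuclideanSpace ℝ (Fin n)),
      iteratedFDeriv ℝ 2 F (a, b) (fun _ => (u, v)) =
        4 * iteratedFDeriv ℝ 2 h (WithLp.toLp 2 (fun i => a i ^ 2 - b i ^ 2))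
            (fun _ => (WithLp.toLp 2 (fun i => a i * u i - b i * v i) : EuclideanSpace ℝ (Fin n)))
        + 2 * ∑ i, ((gradient h (WithLp.toLp 2 (fun j => a j ^ 2 - b j ^ 2)) i + μ) * u i ^ 2
            + (μ - gradient h (WithLp.toLp 2 (fun j => a j ^ 2 - b j ^ 2)) i) * v i ^ 2) := by
  have hp1 : ∀ i : Fin n, ContDiff ℝ 2
      (fun p : EuclideanSpace ℝ (Fin n) × EuclideanSpace ℝ (Fin n) => p.1 i) := fun i =>
    ((EuclideanSpace.proj i : EuclideanSpace ℝ (Fin n) →L[ℝ] ℝ).contDiff).comp contDiff_fst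
  have hp2 : ∀ i : Fin n, ContDiff ℝ 2
      (fun p : EuclideanSpace ℝ (Fin n) × EuclideanSpace ℝ (Fin n) => p.2 i) := fun i =>
    ((EuclideanSpace.proj i : EuclideanSpace ℝ (Fin n) →L[ℝ] ℝ).contDiff).comp contDiff_snd
  have hF2 : ContDiff ℝ 2 F := by
    subst hF
    apply ContDiff.add
    · apply hh.comp
      apply contDiff_euclidean.mpr
      intro i
      exact ((hp1 i).pow 2).sub ((hp2 i).pow 2)
    · exact contDiff_const.mul (ContDiff.sum fun i _ => ((hp1 i).pow 2).add ((hp2 i).pow 2))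
  refine ⟨hF2, ?_⟩
  intro a b u v
  set s0 : EuclideanSpace ℝ (Fin n) := WithLp.toLp 2 (fun i => a i ^ 2 - b i ^ 2) with hs0
  set m : EuclideanSpace ℝ (Fin n) := WithLp.toLp 2 (fun i => a i * u i - b i * v i) with hm
  set c : EuclideanSpace ℝ (Fin n) := WithLp.toLp 2 (fun i => 2 * (a i * u i - b i * v i)) with hc
  set d : EuclideanSpace ℝ (Fin n) := WithLp.toLp 2 (fun i => u i ^ 2 - v i ^ 2) with hd
  set γ : ℝ → EuclideanSpace ℝ (Fin n) := fun t => s0 + t • c + (t * t) • d with hγdef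
  have hγ : ∀ t : ℝ, HasDerivAt γ (c + (2 * t) • d) t := by
    intro t
    have h1 : HasDerivAt (fun t : ℝ => s0 + t • c + (t * t) • d)
        (0 + (1 : ℝ) • c + (1 * t + t * 1) • d) t :=
      ((hasDerivAt_const t s0).add ((hasDerivAt_id t).smul_const c)).add
        (((hasDerivAt_id t).mul (hasDerivAt_id t)).smul_const d)
    simpa [two_mul, show (1 : ℝ) * t + t * 1 = 2 * t by ring] using h1
  have hγ0 : γ 0 = s0 := by simp [hγdef]
  have haveF : (fun t : ℝ => F ((a, b) + t • (u, v)))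
      = fun t => h (γ t) + μ * ∑ i, ((a i + t * u i) ^ 2 + (b i + t * v i) ^ 2) := by
    funext t
    rw [hF]
    simp only
    congr 1
    · congr 1
      ext i
      simp only [hγdef, hs0, hc, hd, PiLp.add_apply, PiLp.smul_apply, Prod.fst_add,
        Prod.smul_fst, Prod.snd_add, Prod.smul_snd, smul_eq_mul, PiLp.toLp_apply]
      ring
  have hsum : ∀ t : ℝ, HasDerivAt
      (fun t : ℝ => ∑ i, ((a i + t * u i) ^ 2 + (b i + t * v i) ^ 2))
      (∑ i, (2 * (a i + t * u i) * u i + 2 * (b i + t * v i) * v i)) t := by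
    intro t
    apply HasDerivAt.fun_sum
    intro i _
    have h1 : HasDerivAt (fun t : ℝ => a i + t * u i) (u i) t := by
      simpa using (hasDerivAt_const t (a i)).fun_add ((hasDerivAt_id t).mul_const (u i))
    have h2 : HasDerivAt (fun t : ℝ => b i + t * v i) (v i) t := by
      simpa using (hasDerivAt_const t (b i)).fun_add ((hasDerivAt_id t).mul_const (v i))
    have h3 := (h1.fun_pow 2).fun_add (h2.fun_pow 2)
    convert h3 using 1
    simp only [Nat.cast_ofNat, Nat.reduceSub, pow_one]
  have hhγ : ∀ t : ℝ, HasDerivAt (fun t => h (γ t)) (fderiv ℝ h (γ t) (c + (2 * t) • d)) t := by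
    intro t
    simpa [Function.comp_def] using
      ((hh.differentiable two_ne_zero (γ t)).hasFDerivAt).comp_hasDerivAt t (hγ t)
  set e1 : ℝ → ℝ := fun t => fderiv ℝ h (γ t) (c + (2 * t) • d)
      + μ * ∑ i, (2 * (a i + t * u i) * u i + 2 * (b i + t * v i) * v i) with he1def
  have hφe : ∀ t : ℝ, HasDerivAt (fun t : ℝ => F ((a, b) + t • (u, v))) (e1 t) t := by
    intro t
    rw [haveF]
    exact (hhγ t).add ((hsum t).const_mul μ)
  have hline : ∀ t : ℝ, HasDerivAt (fun t : ℝ => (a, b) + t • (u, v)) (u, v) t := by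
    intro t
    simpa using (hasDerivAt_const t ((a, b) : EuclideanSpace ℝ (Fin n) × EuclideanSpace ℝ (Fin n))).fun_add
      ((hasDerivAt_id t).smul_const ((u, v) : EuclideanSpace ℝ (Fin n) × EuclideanSpace ℝ (Fin n)))
  have hφF : ∀ t : ℝ, HasDerivAt (fun t : ℝ => F ((a, b) + t • (u, v)))
      (fderiv ℝ F ((a, b) + t • (u, v)) (u, v)) t := by
    intro t
    simpa [Function.comp_def] using
      ((hF2.differentiable two_ne_zero _).hasFDerivAt).comp_hasDerivAt t (hline t)
  have heq : (fun t : ℝ => fderiv ℝ F ((a, b) + t • (u, v)) (u, v)) = e1 :=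
    funext fun t => (hφF t).unique (hφe t)
  have hF1 : ContDiff ℝ 1 (fderiv ℝ F) := hF2.fderiv_right (le_refl 2)
  have hh1 : ContDiff ℝ 1 (fderiv ℝ h) := hh.fderiv_right (le_refl 2)
  have hD2F : HasDerivAt (fun t : ℝ => fderiv ℝ F ((a, b) + t • (u, v)) (u, v))
      (fderiv ℝ (fderiv ℝ F) (a, b) (u, v) (u, v)) 0 := by
    have h1 : HasDerivAt (fun t : ℝ => fderiv ℝ F ((a, b) + t • (u, v)))
        (fderiv ℝ (fderiv ℝ F) (a, b) (u, v)) 0 := by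
      have hdF : HasFDerivAt (fderiv ℝ F) (fderiv ℝ (fderiv ℝ F) (a, b)) ((a, b) + (0 : ℝ) • (u, v)) := by
        simpa using ((hF1.differentiable one_ne_zero) (a, b)).hasFDerivAt
      simpa [Function.comp_def] using hdF.comp_hasDerivAt 0 (hline 0)
    simpa using h1.clm_apply (hasDerivAt_const 0 ((u, v) : EuclideanSpace ℝ (Fin n) × EuclideanSpace ℝ (Fin n)))
  have he1' : HasDerivAt e1
      (fderiv ℝ (fderiv ℝ h) s0 c c + fderiv ℝ h s0 ((2 : ℝ) • d)
        + μ * ∑ i, (2 * u i * u i + 2 * v i * v i)) 0 := by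
    have h1 : HasDerivAt (fun t : ℝ => fderiv ℝ h (γ t))
        (fderiv ℝ (fderiv ℝ h) s0 c) 0 := by
      have hdh : HasFDerivAt (fderiv ℝ h) (fderiv ℝ (fderiv ℝ h) s0) (γ 0) := by
        rw [hγ0]; exact ((hh1.differentiable one_ne_zero) s0).hasFDerivAt
      simpa [Function.comp_def] using hdh.comp_hasDerivAt 0 (hγ 0)
    have h2 : HasDerivAt (fun t : ℝ => c + (2 * t) • d) ((2 : ℝ) • d) 0 := by
      simpa using (hasDerivAt_const (0 : ℝ) c).fun_add
        (((hasDerivAt_id (0 : ℝ)).const_mul (2 : ℝ)).smul_const d)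
    have h3 := h1.clm_apply h2
    simp only [mul_zero, zero_smul, add_zero, hγ0] at h3
    have h4 : HasDerivAt (fun t : ℝ => ∑ i, (2 * (a i + t * u i) * u i + 2 * (b i + t * v i) * v i))
        (∑ i, (2 * u i * u i + 2 * v i * v i)) 0 := by
      apply HasDerivAt.fun_sum
      intro i _
      have ha1 : HasDerivAt (fun t : ℝ => a i + t * u i) (u i) 0 := by
        simpa using (hasDerivAt_const (0 : ℝ) (a i)).fun_add ((hasDerivAt_id (0 : ℝ)).mul_const (u i))
      have hb1 : HasDerivAt (fun t : ℝ => b i + t * v i) (v i) 0 := by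
        simpa using (hasDerivAt_const (0 : ℝ) (b i)).fun_add ((hasDerivAt_id (0 : ℝ)).mul_const (v i))
      have h5 := ((ha1.const_mul 2).mul_const (u i)).fun_add ((hb1.const_mul 2).mul_const (v i))
      convert h5 using 1 <;> ring
    exact h3.add (h4.const_mul μ)
  have key : fderiv ℝ (fderiv ℝ F) (a, b) (u, v) (u, v)
      = fderiv ℝ (fderiv ℝ h) s0 c c + fderiv ℝ h s0 ((2 : ℝ) • d)
        + μ * ∑ i, (2 * u i * u i + 2 * v i * v i) := by
    rw [heq] at hD2F
    exact hD2F.unique he1'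
  have hgrad : ∀ y : EuclideanSpace ℝ (Fin n), fderiv ℝ h s0 y = ∑ i, gradient h s0 i * y i := by
    intro y
    have h1 : (inner ℝ (gradient h s0) y : ℝ) = fderiv ℝ h s0 y := InnerProductSpace.toDual_symm_apply
    rw [← h1, PiLp.inner_apply]
    simp only [RCLike.inner_apply', conj_trivial]
  have hcm : c = (2 : ℝ) • m := by
    ext i
    simp only [hc, hm, PiLp.smul_apply, smul_eq_mul, PiLp.toLp_apply]
  have hsum2 : 2 * (∑ i, gradient h s0 i * d i) + μ * ∑ i, (2 * u i * u i + 2 * v i * v i)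
      = 2 * ∑ i, ((gradient h s0 i + μ) * u i ^ 2 + (μ - gradient h s0 i) * v i ^ 2) := by
    rw [Finset.mul_sum, Finset.mul_sum, Finset.mul_sum, ← Finset.sum_add_distrib]
    apply Finset.sum_congr rfl
    intro i _
    simp only [hd]
    ring
  rw [iteratedFDeriv_two_apply, iteratedFDeriv_two_apply]
  rw [key, hcm]
  simp only [map_smul, ContinuousLinearMap.smul_apply, PiLp.smul_apply, smul_eq_mul, hgrad]
  have h2d : ∑ x, gradient h s0 x * (2 * d x) = 2 * ∑ x, gradient h s0 x * d x := by
    rw [Finset.mul_sum]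
    exact Finset.sum_congr rfl fun i _ => by ring
  linear_combination hsum2 + h2d
end

section
/- A point (a,b) ∈ ℝⁿ×ℝⁿ satisfies ∇F(a,b) = 0 if and only if for each i ∈ {1,…,n} at least one of the following holds, where s = a² − b²: (i) aᵢ = bᵢ = 0; (ii) aᵢ = 0 and ∇h(s)ᵢ = μ; (iii) bᵢ = 0 and ∇h(s)ᵢ = −μ. -/
open scoped BigOperators

/-- `(a,b)` satisfies `∇F(a,b) = 0` iff for each `i` one of the
following holds (with `s = a² − b²`): (i) `aᵢ = bᵢ = 0`; (ii) `aᵢ = 0` and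
`∇h(s)ᵢ = μ`; (iii) `bᵢ = 0` and `∇h(s)ᵢ = −μ`. -/
theorem stmt4 (n : ℕ) (hn : 0 < n)
    (h : EuclideanSpace ℝ (Fin n) → ℝ) (hh : ContDiff ℝ 2 h)
    (μ : ℝ) (hμ : 0 < μ)
    (F : EuclideanSpace ℝ (Fin n) × EuclideanSpace ℝ (Fin n) → ℝ)
    (hF : F = fun p =>
      h (WithLp.toLp 2 (fun i => p.1 i ^ 2 - p.2 i ^ 2)) + μ * ∑ i, (p.1 i ^ 2 + p.2 i ^ 2))
    (a b : EuclideanSpace ℝ (Fin n))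
    (s : EuclideanSpace ℝ (Fin n)) (hs : s = WithLp.toLp 2 (fun i => a i ^ 2 - b i ^ 2)) :
    fderiv ℝ F (a, b) = 0 ↔
      ∀ i : Fin n,
        (a i = 0 ∧ b i = 0) ∨
        (a i = 0 ∧ gradient h s i = μ) ∨
        (b i = 0 ∧ gradient h s i = -μ) := by
  classical
  set P1 : Fin n → (EuclideanSpace ℝ (Fin n) × EuclideanSpace ℝ (Fin n) →L[ℝ] ℝ) := fun i =>
    (EuclideanSpace.proj i).comp
      (ContinuousLinearMap.fst ℝ (EuclideanSpace ℝ (Fin n)) (EuclideanSpace ℝ (Fin n))) with hP1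
  set P2 : Fin n → (EuclideanSpace ℝ (Fin n) × EuclideanSpace ℝ (Fin n) →L[ℝ] ℝ) := fun i =>
    (EuclideanSpace.proj i).comp
      (ContinuousLinearMap.snd ℝ (EuclideanSpace ℝ (Fin n)) (EuclideanSpace ℝ (Fin n))) with hP2
  have e1 : ∀ i, HasFDerivAt
      (fun p : EuclideanSpace ℝ (Fin n) × EuclideanSpace ℝ (Fin n) => p.1 i) (P1 i) (a, b) :=
    fun i => (P1 i).hasFDerivAt
  have e2 : ∀ i, HasFDerivAt
      (fun p : EuclideanSpace ℝ (Fin n) × EuclideanSpace ℝ (Fin n) => p.2 i) (P2 i) (a, b) :=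
    fun i => (P2 i).hasFDerivAt
  have hsq1 : ∀ i, HasFDerivAt
      (fun p : EuclideanSpace ℝ (Fin n) × EuclideanSpace ℝ (Fin n) => p.1 i ^ 2)
      ((2 * a i) • P1 i) (a, b) := by
    intro i
    have := (e1 i).mul (e1 i)
    simpa [pow_two, two_mul, add_smul, Pi.mul_def] using this
  have hsq2 : ∀ i, HasFDerivAt
      (fun p : EuclideanSpace ℝ (Fin n) × EuclideanSpace ℝ (Fin n) => p.2 i ^ 2)
      ((2 * b i) • P2 i) (a, b) := by
    intro i
    have := (e2 i).mul (e2 i)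
    simpa [pow_two, two_mul, add_smul, Pi.mul_def] using this
  set DG0 : EuclideanSpace ℝ (Fin n) × EuclideanSpace ℝ (Fin n) →L[ℝ] (Fin n → ℝ) :=
    ContinuousLinearMap.pi (fun i => (2 * a i) • P1 i - (2 * b i) • P2 i) with hDG0
  set G0 : EuclideanSpace ℝ (Fin n) × EuclideanSpace ℝ (Fin n) → (Fin n → ℝ) :=
    fun p => (fun i => p.1 i ^ 2 - p.2 i ^ 2) with hG0def
  have hG0 : HasFDerivAt G0 DG0 (a, b) := by
    rw [hG0def, hasFDerivAt_pi']
    intro i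
    rw [hDG0, ContinuousLinearMap.proj_pi]
    exact (hsq1 i).sub (hsq2 i)
  set φ : PiLp 2 (fun _ : Fin n => ℝ) ≃L[ℝ] (Fin n → ℝ) :=
    PiLp.continuousLinearEquiv 2 ℝ (fun _ : Fin n => ℝ) with hφ
  set DG : EuclideanSpace ℝ (Fin n) × EuclideanSpace ℝ (Fin n) →L[ℝ] EuclideanSpace ℝ (Fin n) :=
    ((φ.symm : (Fin n → ℝ) →L[ℝ] EuclideanSpace ℝ (Fin n)).comp DG0) with hDG
  have hG :=
    ((φ.symm : (Fin n → ℝ) →L[ℝ] EuclideanSpace ℝ (Fin n)).hasFDerivAt).comp (a, b) hG0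
  clear_value G0
  have hdiff : DifferentiableAt ℝ h s :=
    (hh.differentiable (by norm_num)).differentiableAt
  have hhs : HasFDerivAt h (fderiv ℝ h s) s := hdiff.hasFDerivAt
  have hcomp : HasFDerivAt
      (fun p : EuclideanSpace ℝ (Fin n) × EuclideanSpace ℝ (Fin n) =>
        h (WithLp.toLp 2 (fun i => p.1 i ^ 2 - p.2 i ^ 2)))
      ((fderiv ℝ h s).comp DG) (a, b) := by
    have hhs' : HasFDerivAt h (fderiv ℝ h s)
        ((⇑(φ.symm : (Fin n → ℝ) →L[ℝ] EuclideanSpace ℝ (Fin n)) ∘ G0) (a, b)) := by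
      have e : (⇑(φ.symm : (Fin n → ℝ) →L[ℝ] EuclideanSpace ℝ (Fin n)) ∘ G0) (a, b) = s := by
        rw [hG0def, hs]; rfl
      rw [e]; exact hhs
    have := hhs'.comp (a, b) hG
    rw [hG0def] at this
    exact this
  set Lc : EuclideanSpace ℝ (Fin n) × EuclideanSpace ℝ (Fin n) →L[ℝ] ℝ :=
    μ • ∑ i, ((2 * a i) • P1 i + (2 * b i) • P2 i) with hLc
  have hcsum : HasFDerivAt
      (fun p : EuclideanSpace ℝ (Fin n) × EuclideanSpace ℝ (Fin n) =>
        μ * ∑ i, (p.1 i ^ 2 + p.2 i ^ 2)) Lc (a, b) :=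
    by have := HasFDerivAt.const_mul
        (HasFDerivAt.sum (u := Finset.univ) (fun i _ => (hsq1 i).add (hsq2 i))) μ
       simpa only [Finset.sum_apply, Pi.add_apply] using this
  set L : EuclideanSpace ℝ (Fin n) × EuclideanSpace ℝ (Fin n) →L[ℝ] ℝ :=
    (fderiv ℝ h s).comp DG + Lc with hL
  have hFd : HasFDerivAt F L (a, b) := by
    rw [hF]; exact hcomp.add hcsum
  have hfd : fderiv ℝ F (a, b) = L := hFd.fderiv
  have hinner : ∀ w : EuclideanSpace ℝ (Fin n),
      fderiv ℝ h s w = ∑ j, gradient h s j * w j := by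
    intro w
    have h1 : (inner ℝ (gradient h s) w : ℝ) = fderiv ℝ h s w := by
      unfold gradient
      exact InnerProductSpace.toDual_symm_apply
    rw [← h1, PiLp.inner_apply]
    simp [RCLike.inner_apply, mul_comm]
  have hDGv : ∀ (v : EuclideanSpace ℝ (Fin n) × EuclideanSpace ℝ (Fin n)) (j : Fin n),
      (DG v) j = 2 * a j * v.1 j - 2 * b j * v.2 j := by
    intro v j
    rw [hDG]
    show φ.symm (DG0 v) j = _
    have e : φ.symm (DG0 v) j = DG0 v j := rfl
    rw [e, hDG0]
    simp [hP1, hP2, EuclideanSpace.proj]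
  have hLval : ∀ v : EuclideanSpace ℝ (Fin n) × EuclideanSpace ℝ (Fin n), L v =
      ∑ j, (gradient h s j * (2 * a j * v.1 j - 2 * b j * v.2 j)
        + μ * (2 * a j * v.1 j + 2 * b j * v.2 j)) := by
    intro v
    rw [hL]
    simp only [ContinuousLinearMap.add_apply, ContinuousLinearMap.comp_apply]
    rw [hinner]
    have hLcv : Lc v = ∑ j, μ * (2 * a j * v.1 j + 2 * b j * v.2 j) := by
      rw [hLc]
      simp only [ContinuousLinearMap.smul_apply, ContinuousLinearMap.sum_apply,
        ContinuousLinearMap.add_apply, ContinuousLinearMap.smul_apply, hP1, hP2,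
        ContinuousLinearMap.comp_apply, ContinuousLinearMap.coe_fst',
        ContinuousLinearMap.coe_snd', smul_eq_mul, Finset.mul_sum]
      refine Finset.sum_congr rfl fun j _ => ?_
      simp [EuclideanSpace.proj]
      try ring
    rw [hLcv, ← Finset.sum_add_distrib]
    refine Finset.sum_congr rfl fun j _ => ?_
    rw [hDGv]
  constructor
  · intro h0 i
    have hA : L (EuclideanSpace.single i 1, 0) = 0 := by
      rw [← hfd, h0]; rfl
    have hB : L (0, EuclideanSpace.single i 1) = 0 := by
      rw [← hfd, h0]; rfl
    rw [hLval] at hA hB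
    rw [Finset.sum_eq_single i
      (fun j _ hj => by simp [EuclideanSpace.single_apply, hj])
      (fun hi => absurd (Finset.mem_univ i) hi)] at hA hB
    simp only [EuclideanSpace.single_apply, eq_self_iff_true, if_true, PiLp.zero_apply,
      mul_zero, mul_one, add_zero, zero_add, sub_zero, zero_sub] at hA hB
    have hA' : 2 * a i * (gradient h s i + μ) = 0 := by linear_combination hA
    have hB' : 2 * b i * (μ - gradient h s i) = 0 := by linear_combination hB
    have ha' : a i = 0 ∨ gradient h s i = -μ := by
      rcases mul_eq_zero.mp hA' with h1 | h1
      · rcases mul_eq_zero.mp h1 with h2 | h2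
        · norm_num at h2
        · exact Or.inl h2
      · right; linarith
    have hb' : b i = 0 ∨ gradient h s i = μ := by
      rcases mul_eq_zero.mp hB' with h1 | h1
      · rcases mul_eq_zero.mp h1 with h2 | h2
        · norm_num at h2
        · exact Or.inl h2
      · right; linarith
    rcases ha' with ha0 | hg1
    · rcases hb' with hb0 | hg2
      · exact Or.inl ⟨ha0, hb0⟩
      · exact Or.inr (Or.inl ⟨ha0, hg2⟩)
    · rcases hb' with hb0 | hg2
      · exact Or.inr (Or.inr ⟨hb0, hg1⟩)
      · exfalso; rw [hg1] at hg2; linarith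
  · intro hcond
    rw [hfd]
    refine ContinuousLinearMap.ext fun v => ?_
    rw [hLval v]
    simp only [ContinuousLinearMap.zero_apply]
    refine Finset.sum_eq_zero fun j _ => ?_
    rcases hcond j with ⟨ha0, hb0⟩ | ⟨ha0, hg⟩ | ⟨hb0, hg⟩
    · rw [ha0, hb0]; ring
    · rw [ha0, hg]; ring
    · rw [hb0, hg]; ring
end

section
/- If (ā,b̄) ∈ ℝⁿ×ℝⁿ satisfies ∇F(ā,b̄) = 0, then min{āᵢ², b̄ᵢ²} = 0 for every i ∈ {1,…,n}, i.e., for each i at least one of āᵢ and b̄ᵢ is zero. -/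
open scoped BigOperators

lemma stmt5_aux (n : ℕ) (h : EuclideanSpace ℝ (Fin n) → ℝ)
    (xbar Ei : EuclideanSpace ℝ (Fin n))
    (g : EuclideanSpace ℝ (Fin n) →L[ℝ] ℝ) (hgh : HasFDerivAt h g xbar)
    (c S μ ε : ℝ) (φ : ℝ → ℝ)
    (hφfun : φ = fun t => h (xbar + (ε * (2 * c * t + t ^ 2)) • Ei)
      + μ * (S + (2 * c * t + t ^ 2)))
    (hφ0 : HasDerivAt φ 0 0) : 2 * c * (ε * g Ei + μ) = 0 := by
  have hψ : HasDerivAt (fun t : ℝ => 2 * c * t + t ^ 2) (2 * c) 0 := by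
    have h2 : HasDerivAt (fun t : ℝ => t ^ 2) 0 0 := by
      simpa using hasDerivAt_pow 2 (0 : ℝ)
    simpa using ((hasDerivAt_id (0 : ℝ)).const_mul (2 * c)).fun_add h2
  have hεψ : HasDerivAt (fun t : ℝ => ε * (2 * c * t + t ^ 2)) (ε * (2 * c)) 0 :=
    hψ.const_mul ε
  have hγ : HasDerivAt (fun t : ℝ => xbar + (ε * (2 * c * t + t ^ 2)) • Ei)
      ((ε * (2 * c)) • Ei) 0 := (hεψ.smul_const Ei).const_add xbar
  have hgh0 : HasFDerivAt h g (xbar + (ε * (2 * c * 0 + 0 ^ 2)) • Ei) := by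
    simpa using hgh
  have hcomp : HasDerivAt (fun t : ℝ => h (xbar + (ε * (2 * c * t + t ^ 2)) • Ei))
      (g ((ε * (2 * c)) • Ei)) 0 := hgh0.comp_hasDerivAt 0 hγ
  have hlin : HasDerivAt (fun t : ℝ => μ * (S + (2 * c * t + t ^ 2))) (μ * (2 * c)) 0 :=
    (hψ.const_add S).const_mul μ
  have htot : HasDerivAt φ (g ((ε * (2 * c)) • Ei) + μ * (2 * c)) 0 := by
    rw [hφfun]; exact hcomp.add hlin
  have heq : g ((ε * (2 * c)) • Ei) + μ * (2 * c) = 0 := htot.unique hφ0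
  rw [map_smul, smul_eq_mul] at heq
  nlinarith [heq]

/-- If `∇F(ā,b̄) = 0` then `min{āᵢ², b̄ᵢ²} = 0` for every `i`. -/
theorem stmt5 (n : ℕ) (hn : 0 < n)
    (h : EuclideanSpace ℝ (Fin n) → ℝ) (hh : ContDiff ℝ 2 h)
    (μ : ℝ) (hμ : 0 < μ)
    (F : EuclideanSpace ℝ (Fin n) × EuclideanSpace ℝ (Fin n) → ℝ)
    (hF : F = fun p =>
      h (WithLp.toLp 2 (fun i => p.1 i ^ 2 - p.2 i ^ 2)) + μ * ∑ i, (p.1 i ^ 2 + p.2 i ^ 2))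
    (a b : EuclideanSpace ℝ (Fin n))
    (hstat : fderiv ℝ F (a, b) = 0) :
    ∀ i : Fin n, min (a i ^ 2) (b i ^ 2) = 0 := by
  classical
  have hhd : Differentiable ℝ h := hh.differentiable (by norm_num)
  have hcoord1 : ∀ j : Fin n, Differentiable ℝ
      (fun p : EuclideanSpace ℝ (Fin n) × EuclideanSpace ℝ (Fin n) => p.1 j) := by
    intro j
    have h1 : Differentiable ℝ (EuclideanSpace.proj (𝕜 := ℝ) j) :=
      (EuclideanSpace.proj (𝕜 := ℝ) j).differentiable
    exact h1.comp differentiable_fst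
  have hcoord2 : ∀ j : Fin n, Differentiable ℝ
      (fun p : EuclideanSpace ℝ (Fin n) × EuclideanSpace ℝ (Fin n) => p.2 j) := by
    intro j
    have h1 : Differentiable ℝ (EuclideanSpace.proj (𝕜 := ℝ) j) :=
      (EuclideanSpace.proj (𝕜 := ℝ) j).differentiable
    exact h1.comp differentiable_snd
  have hpi : Differentiable ℝ
      (fun p : EuclideanSpace ℝ (Fin n) × EuclideanSpace ℝ (Fin n) =>
        ((fun j => p.1 j ^ 2 - p.2 j ^ 2) : Fin n → ℝ)) :=
    differentiable_pi.mpr fun j => ((hcoord1 j).pow 2).sub ((hcoord2 j).pow 2)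
  have hq : Differentiable ℝ
      (fun p : EuclideanSpace ℝ (Fin n) × EuclideanSpace ℝ (Fin n) =>
        (PiLp.continuousLinearEquiv 2 ℝ (fun _ : Fin n => ℝ)).symm
          (fun j => p.1 j ^ 2 - p.2 j ^ 2)) :=
    ((PiLp.continuousLinearEquiv 2 ℝ (fun _ : Fin n => ℝ)).symm.differentiable).comp hpi
  have hs : Differentiable ℝ
      (fun p : EuclideanSpace ℝ (Fin n) × EuclideanSpace ℝ (Fin n) =>
        ∑ i, (p.1 i ^ 2 + p.2 i ^ 2)) := by
    apply Differentiable.fun_sum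
    intro j _
    exact ((hcoord1 j).pow 2).add ((hcoord2 j).pow 2)
  have hFd : Differentiable ℝ F := by
    rw [hF]
    exact (hhd.comp hq).add (hs.const_mul μ)
  have hF0 : HasFDerivAt F (0 : (EuclideanSpace ℝ (Fin n) × EuclideanSpace ℝ (Fin n)) →L[ℝ] ℝ)
      (a, b) := hstat ▸ (hFd (a, b)).hasFDerivAt
  intro i
  set xbar : EuclideanSpace ℝ (Fin n) :=
    (PiLp.continuousLinearEquiv 2 ℝ (fun _ : Fin n => ℝ)).symm
      (fun j => a j ^ 2 - b j ^ 2) with hxbar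
  have hxbarj : ∀ j, xbar j = a j ^ 2 - b j ^ 2 := fun j => rfl
  set g := fderiv ℝ h xbar with hg
  have hgh : HasFDerivAt h g xbar := (hhd xbar).hasFDerivAt
  set Ei : EuclideanSpace ℝ (Fin n) := EuclideanSpace.single i (1 : ℝ) with hEiDef
  have hEij : ∀ j, Ei j = if j = i then 1 else 0 := by
    intro j; simp [hEiDef, EuclideanSpace.single_apply]
  set S : ℝ := ∑ j, (a j ^ 2 + b j ^ 2) with hS
  -- a-direction
  have hfa : (fun t : ℝ => F (a + t • Ei, b)) =
      fun t => h (xbar + ((1:ℝ) * (2 * a i * t + t ^ 2)) • Ei)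
        + μ * (S + (2 * a i * t + t ^ 2)) := by
    funext t
    rw [hF]
    beta_reduce
    have harg : (WithLp.toLp 2 (fun j => (a + t • Ei) j ^ 2 - b j ^ 2) : EuclideanSpace ℝ (Fin n)) =
        xbar + ((1:ℝ) * (2 * a i * t + t ^ 2)) • Ei := by
      ext j
      simp only [WithLp.ofLp_toLp]
      have : (a + t • Ei) j = a j + t * Ei j := rfl
      rw [show (xbar + ((1:ℝ) * (2 * a i * t + t ^ 2)) • Ei) j
          = xbar j + ((1:ℝ) * (2 * a i * t + t ^ 2)) * Ei j from rfl,
        this, hxbarj, hEij]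
      by_cases hj : j = i
      · subst hj; simp; ring
      · simp [hj]
    rw [harg]
    have hsum : ∑ j, ((a + t • Ei) j ^ 2 + b j ^ 2) = S + (2 * a i * t + t ^ 2) := by
      have hterm : ∀ j ∈ Finset.univ, (a + t • Ei) j ^ 2 + b j ^ 2 =
          (a j ^ 2 + b j ^ 2) + (if j = i then 2 * a i * t + t ^ 2 else 0) := by
        intro j _
        have : (a + t • Ei) j = a j + t * Ei j := rfl
        rw [this, hEij]
        by_cases hj : j = i
        · subst hj; simp; ring
        · simp [hj]
      rw [Finset.sum_congr rfl hterm, Finset.sum_add_distrib,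
        Finset.sum_ite_eq' Finset.univ i]
      simp [hS]
    rw [hsum]
  have hd0a : HasDerivAt (fun t : ℝ => F (a + t • Ei, b)) 0 0 := by
    have hc1 : HasDerivAt (fun t : ℝ => a + t • Ei) Ei 0 := by
      simpa using ((hasDerivAt_id (0 : ℝ)).smul_const Ei).const_add a
    have hca : HasDerivAt (fun t : ℝ => (a + t • Ei, b))
        (Ei, (0 : EuclideanSpace ℝ (Fin n))) 0 := hc1.prodMk (hasDerivAt_const 0 b)
    have hF0' : HasFDerivAt F
        (0 : (EuclideanSpace ℝ (Fin n) × EuclideanSpace ℝ (Fin n)) →L[ℝ] ℝ)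
        (a + (0:ℝ) • Ei, b) := by simpa using hF0
    simpa [Function.comp_def] using hF0'.comp_hasDerivAt 0 hca
  have hA : 2 * a i * ((1:ℝ) * g Ei + μ) = 0 :=
    stmt5_aux n h xbar Ei g hgh (a i) S μ 1 _ hfa hd0a
  -- b-direction
  have hfb : (fun t : ℝ => F (a, b + t • Ei)) =
      fun t => h (xbar + ((-1:ℝ) * (2 * b i * t + t ^ 2)) • Ei)
        + μ * (S + (2 * b i * t + t ^ 2)) := by
    funext t
    rw [hF]
    beta_reduce
    have harg : (WithLp.toLp 2 (fun j => a j ^ 2 - (b + t • Ei) j ^ 2) : EuclideanSpace ℝ (Fin n)) =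
        xbar + ((-1:ℝ) * (2 * b i * t + t ^ 2)) • Ei := by
      ext j
      simp only [WithLp.ofLp_toLp]
      have : (b + t • Ei) j = b j + t * Ei j := rfl
      rw [show (xbar + ((-1:ℝ) * (2 * b i * t + t ^ 2)) • Ei) j
          = xbar j + ((-1:ℝ) * (2 * b i * t + t ^ 2)) * Ei j from rfl,
        this, hxbarj, hEij]
      by_cases hj : j = i
      · subst hj; simp; ring
      · simp [hj]
    rw [harg]
    have hsum : ∑ j, (a j ^ 2 + (b + t • Ei) j ^ 2) = S + (2 * b i * t + t ^ 2) := by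
      have hterm : ∀ j ∈ Finset.univ, a j ^ 2 + (b + t • Ei) j ^ 2 =
          (a j ^ 2 + b j ^ 2) + (if j = i then 2 * b i * t + t ^ 2 else 0) := by
        intro j _
        have : (b + t • Ei) j = b j + t * Ei j := rfl
        rw [this, hEij]
        by_cases hj : j = i
        · subst hj; simp; ring
        · simp [hj]
      rw [Finset.sum_congr rfl hterm, Finset.sum_add_distrib,
        Finset.sum_ite_eq' Finset.univ i]
      simp [hS]
    rw [hsum]
  have hd0b : HasDerivAt (fun t : ℝ => F (a, b + t • Ei)) 0 0 := by
    have hc1 : HasDerivAt (fun t : ℝ => b + t • Ei) Ei 0 := by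
      simpa using ((hasDerivAt_id (0 : ℝ)).smul_const Ei).const_add b
    have hcb : HasDerivAt (fun t : ℝ => (a, b + t • Ei))
        ((0 : EuclideanSpace ℝ (Fin n)), Ei) 0 := (hasDerivAt_const 0 a).prodMk hc1
    have hF0' : HasFDerivAt F
        (0 : (EuclideanSpace ℝ (Fin n) × EuclideanSpace ℝ (Fin n)) →L[ℝ] ℝ)
        (a, b + (0:ℝ) • Ei) := by simpa using hF0
    simpa [Function.comp_def] using hF0'.comp_hasDerivAt 0 hcb
  have hB : 2 * b i * ((-1:ℝ) * g Ei + μ) = 0 :=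
    stmt5_aux n h xbar Ei g hgh (b i) S μ (-1) _ hfb hd0b
  -- conclude
  rcases mul_eq_zero.mp hA with hA' | hA'
  · have hai : a i = 0 := by
      rcases mul_eq_zero.mp hA' with h' | h'
      · norm_num at h'
      · exact h'
    have h0 : a i ^ 2 = 0 := by rw [hai]; ring
    rw [h0]
    exact min_eq_left (sq_nonneg _)
  · rcases mul_eq_zero.mp hB with hB' | hB'
    · have : b i = 0 := by
        rcases mul_eq_zero.mp hB' with h' | h'
        · norm_num at h'
        · exact h'
      simp [this, min_eq_right, sq_nonneg]
    · exfalso; nlinarith [hA', hB']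
end

section
/- For any (ā,b̄) ∈ ℝⁿ×ℝⁿ the following are equivalent: (i) the point ā² − b̄² is a local minimizer of f and min{āᵢ², b̄ᵢ²} = 0 for every i ∈ {1,…,n}; (ii) (ā,b̄) is a local minimizer of F. -/
open scoped BigOperators

private lemma aux_abs_le (u v : ℝ) : |u ^ 2 - v ^ 2| ≤ u ^ 2 + v ^ 2 := by
  rcases abs_cases (u ^ 2 - v ^ 2) with ⟨h1, _⟩ | ⟨h1, _⟩ <;>
    nlinarith [sq_nonneg u, sq_nonneg v]

private lemma aux_min_abs {u v : ℝ} (h : min (u ^ 2) (v ^ 2) = 0) :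
    u ^ 2 + v ^ 2 = |u ^ 2 - v ^ 2| := by
  rcases min_eq_iff.mp h with ⟨h1, _⟩ | ⟨h1, _⟩
  · rw [h1, zero_add, zero_sub, abs_neg, abs_of_nonneg (sq_nonneg v)]
  · rw [h1, add_zero, sub_zero, abs_of_nonneg (sq_nonneg u)]

private lemma cond_sq (c : Prop) [Decidable c] : ((if c then (-1:ℝ) else 1)) ^ 2 = 1 := by
  split <;> norm_num

private lemma cond_sqrt_sq (c : Prop) [Decidable c] {s : ℝ} (hs : 0 ≤ s) :
    ((if c then (-1:ℝ) else 1) * Real.sqrt s) ^ 2 = s := by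
  rw [mul_pow, cond_sq, one_mul, Real.sq_sqrt hs]

private lemma sign_sqrt_sq (u : ℝ) :
    (if u < 0 then (-1:ℝ) else 1) * Real.sqrt (u ^ 2) = u := by
  rw [Real.sqrt_sq_eq_abs]
  rcases lt_or_ge u 0 with h | h
  · rw [if_pos h, abs_of_neg h]; ring
  · rw [if_neg (not_lt.mpr h), abs_of_nonneg h, one_mul]

private lemma max_sub_max (x : ℝ) : max x 0 - max (-x) 0 = x := by
  rcases le_total 0 x with h | h
  · rw [max_eq_left h, max_eq_right (by linarith : -x ≤ 0)]; ring
  · rw [max_eq_right h, max_eq_left (by linarith : (0:ℝ) ≤ -x)]; ring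

private lemma max_add_max (x : ℝ) : max x 0 + max (-x) 0 = |x| := by
  rcases le_total 0 x with h | h
  · rw [max_eq_left h, max_eq_right (by linarith : -x ≤ 0), abs_of_nonneg h]; ring
  · rw [max_eq_right h, max_eq_left (by linarith : (0:ℝ) ≤ -x), abs_of_nonpos h]; ring

set_option maxHeartbeats 1000000 in
/-- `(ā,b̄)` is a local minimizer of `F` iff `ā² − b̄²` is a local
minimizer of `f` and `min{āᵢ², b̄ᵢ²} = 0` for every `i`. -/
theorem stmt6 (n : ℕ) (hn : 0 < n)
    (h : EuclideanSpace ℝ (Fin n) → ℝ) (hh : ContDiff ℝ 2 h)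
    (μ : ℝ) (hμ : 0 < μ)
    (f : EuclideanSpace ℝ (Fin n) → ℝ)
    (hf : f = fun x => h x + μ * ∑ i, |x i|)
    (F : EuclideanSpace ℝ (Fin n) × EuclideanSpace ℝ (Fin n) → ℝ)
    (hF : F = fun p =>
      h (WithLp.toLp 2 (fun i => p.1 i ^ 2 - p.2 i ^ 2)) + μ * ∑ i, (p.1 i ^ 2 + p.2 i ^ 2))
    (a b : EuclideanSpace ℝ (Fin n)) :
    (IsLocalMin f (WithLp.toLp 2 (fun i => a i ^ 2 - b i ^ 2)) ∧
      ∀ i : Fin n, min (a i ^ 2) (b i ^ 2) = 0) ↔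
    IsLocalMin F (a, b) := by
  subst hf hF
  set xb : EuclideanSpace ℝ (Fin n) := WithLp.toLp 2 (fun i => a i ^ 2 - b i ^ 2) with hxb
  constructor
  · rintro ⟨hmin, hzero⟩
    have hsumab : ∑ i, (a i ^ 2 + b i ^ 2) = ∑ i, |a i ^ 2 - b i ^ 2| :=
      Finset.sum_congr rfl fun i _ => aux_min_abs (hzero i)
    have hφ : Continuous (fun p : EuclideanSpace ℝ (Fin n) × EuclideanSpace ℝ (Fin n) => (WithLp.toLp 2 (fun i => p.1 i ^ 2 - p.2 i ^ 2) : EuclideanSpace ℝ (Fin n))) := by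
      refine (PiLp.continuous_toLp 2 _).comp ?_
      apply continuous_pi
      intro i
      exact (((PiLp.continuous_apply 2 _ i).comp continuous_fst).pow 2).sub
        (((PiLp.continuous_apply 2 _ i).comp continuous_snd).pow 2)
    have htd : Filter.Tendsto (fun p : EuclideanSpace ℝ (Fin n) × EuclideanSpace ℝ (Fin n) => (WithLp.toLp 2 (fun i => p.1 i ^ 2 - p.2 i ^ 2) : EuclideanSpace ℝ (Fin n)))
        (nhds (a, b)) (nhds xb) := hφ.continuousAt
    have hev := htd.eventually hmin
    filter_upwards [hev] with p hp
    have h1 : ∑ i, |p.1 i ^ 2 - p.2 i ^ 2| ≤ ∑ i, (p.1 i ^ 2 + p.2 i ^ 2) :=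
      Finset.sum_le_sum fun i _ => aux_abs_le _ _
    have h2 : h xb + μ * ∑ i, |a i ^ 2 - b i ^ 2| ≤
        h (WithLp.toLp 2 (fun i => p.1 i ^ 2 - p.2 i ^ 2) : EuclideanSpace ℝ (Fin n)) + μ * ∑ i, |p.1 i ^ 2 - p.2 i ^ 2| := hp
    have h3 := mul_le_mul_of_nonneg_left h1 hμ.le
    show h (WithLp.toLp 2 (fun i => a i ^ 2 - b i ^ 2)) + μ * ∑ i, (a i ^ 2 + b i ^ 2) ≤
      h (WithLp.toLp 2 (fun i => p.1 i ^ 2 - p.2 i ^ 2)) + μ * ∑ i, (p.1 i ^ 2 + p.2 i ^ 2)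
    rw [hsumab]
    linarith
  · intro hmin
    have hzero : ∀ i : Fin n, min (a i ^ 2) (b i ^ 2) = 0 := by
      intro i
      by_contra hne
      have hasq : 0 < a i ^ 2 := by
        rcases lt_or_eq_of_le (sq_nonneg (a i)) with h' | h'
        · exact h'
        · exfalso; apply hne; rw [← h']; exact min_eq_left (h' ▸ sq_nonneg (b i))
      have hbsq : 0 < b i ^ 2 := by
        rcases lt_or_eq_of_le (sq_nonneg (b i)) with h' | h'
        · exact h'
        · exfalso; apply hne; rw [← h']; exact min_eq_right (h' ▸ sq_nonneg (a i))
      -- the curve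
      set σ : ℝ := if b i < 0 then -1 else 1 with hσ
      set w : ℝ → ℝ := fun t => b i ^ 2 - (1 - t ^ 2) * a i ^ 2 with hw
      set A : ℝ → EuclideanSpace ℝ (Fin n) := fun t => WithLp.toLp 2 (fun j => if j = i then t * a i else a j) with hA
      set B : ℝ → EuclideanSpace ℝ (Fin n) := fun t => WithLp.toLp 2 (fun j => if j = i then σ * Real.sqrt (w t) else b j) with hB
      have hcurve1 : (A 1, B 1) = (a, b) := by
        have hA1 : A 1 = a := by
          ext j
          simp only [hA, WithLp.ofLp_toLp]
          split
          · rename_i hj; rw [hj]; ring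
          · rfl
        have hB1 : B 1 = b := by
          ext j
          simp only [hB, WithLp.ofLp_toLp]
          split
          · rename_i hj
            rw [hj]
            have : w 1 = b i ^ 2 := by simp only [hw]; ring
            rw [this, hσ, sign_sqrt_sq]
          · rfl
        rw [hA1, hB1]
      have hcont : Continuous (fun t : ℝ => (A t, B t)) := by
        apply Continuous.prodMk
        · refine (PiLp.continuous_toLp 2 _).comp ?_
          apply continuous_pi
          intro j
          simp only [hA]
          split
          · exact (continuous_id.mul continuous_const)
          · exact continuous_const
        · refine (PiLp.continuous_toLp 2 _).comp ?_
          apply continuous_pi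
          intro j
          simp only [hB]
          split
          · exact continuous_const.mul (Real.continuous_sqrt.comp (by fun_prop))
          · exact continuous_const
      have htd : Filter.Tendsto (fun t : ℝ => (A t, B t)) (nhdsWithin 1 (Set.Iio 1))
          (nhds (a, b)) := by
        have := hcont.continuousAt (x := (1:ℝ))
        rw [ContinuousAt, hcurve1] at this
        exact this.mono_left nhdsWithin_le_nhds
      have E1 := htd.eventually hmin
      have E2 : ∀ᶠ t : ℝ in nhdsWithin 1 (Set.Iio 1), 0 < w t := by
        have hcw : Filter.Tendsto w (nhds 1) (nhds (w 1)) := by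
          apply Continuous.continuousAt; fun_prop
        have hw1 : 0 < w 1 := by simp only [hw]; nlinarith
        exact (hcw.eventually (eventually_gt_nhds hw1)).filter_mono nhdsWithin_le_nhds
      have E3 : ∀ᶠ t : ℝ in nhdsWithin 1 (Set.Iio 1), t ∈ Set.Ioo (0:ℝ) 1 :=
        Filter.eventually_of_mem (Ioo_mem_nhdsLT_of_mem (by constructor <;> norm_num)) fun t ht => ht
      obtain ⟨t, hFt, hwt, ht0, ht1⟩ := (E1.and (E2.and E3)).exists
      -- compute F along the curve
      have hharg : (WithLp.toLp 2 (fun j => A t j ^ 2 - B t j ^ 2) : EuclideanSpace ℝ (Fin n)) = xb := by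
        ext j
        simp only [hA, hB, hxb, WithLp.ofLp_toLp]
        split
        · rename_i hj
          rw [hj, mul_pow, cond_sqrt_sq _ hwt.le]
          simp only [hw]; ring
        · rfl
      have hsum : ∑ j, (A t j ^ 2 + B t j ^ 2) =
          (∑ j, (a j ^ 2 + b j ^ 2)) + 2 * (t ^ 2 - 1) * a i ^ 2 := by
        have key : ∑ j, ((A t j ^ 2 + B t j ^ 2) - (a j ^ 2 + b j ^ 2)) =
            2 * (t ^ 2 - 1) * a i ^ 2 := by
          rw [Finset.sum_eq_single i]
          · simp only [hA, hB, WithLp.ofLp_toLp, if_pos rfl, ↓reduceIte]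
            rw [mul_pow, cond_sqrt_sq _ hwt.le]
            simp only [hw]; ring
          · intro j _ hj
            simp only [hA, hB, WithLp.ofLp_toLp, if_neg hj]
            ring
          · intro habs; exact absurd (Finset.mem_univ i) habs
        rw [Finset.sum_sub_distrib] at key
        linarith
      have hlt : h (WithLp.toLp 2 (fun j => A t j ^ 2 - B t j ^ 2) : EuclideanSpace ℝ (Fin n)) + μ * ∑ j, (A t j ^ 2 + B t j ^ 2) <
          h (WithLp.toLp 2 (fun j => a j ^ 2 - b j ^ 2) : EuclideanSpace ℝ (Fin n)) + μ * ∑ j, (a j ^ 2 + b j ^ 2) := by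
        rw [hharg, hsum, hxb]
        have h1t : 0 < 1 - t ^ 2 := by nlinarith
        have : μ * (2 * (t ^ 2 - 1) * a i ^ 2) < 0 := by
          apply mul_neg_of_pos_of_neg hμ
          nlinarith [mul_pos hasq h1t]
        nlinarith [this]
      have hge : h (WithLp.toLp 2 (fun j => a j ^ 2 - b j ^ 2) : EuclideanSpace ℝ (Fin n)) + μ * ∑ j, (a j ^ 2 + b j ^ 2) ≤
          h (WithLp.toLp 2 (fun j => A t j ^ 2 - B t j ^ 2) : EuclideanSpace ℝ (Fin n)) + μ * ∑ j, (A t j ^ 2 + B t j ^ 2) := hFt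
      linarith
    refine ⟨?_, hzero⟩
    -- local minimality of f
    have hsumab : ∑ i, (a i ^ 2 + b i ^ 2) = ∑ i, |a i ^ 2 - b i ^ 2| :=
      Finset.sum_congr rfl fun i _ => aux_min_abs (hzero i)
    set g : EuclideanSpace ℝ (Fin n) → EuclideanSpace ℝ (Fin n) × EuclideanSpace ℝ (Fin n) := fun x =>
      (WithLp.toLp 2 (fun j => (if a j < 0 then (-1:ℝ) else 1) * Real.sqrt (max (x j) 0)) ,
       WithLp.toLp 2 (fun j => (if b j < 0 then (-1:ℝ) else 1) * Real.sqrt (max (-(x j)) 0))) with hg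
    have hgxb : g xb = (a, b) := by
      simp only [hg, hxb, WithLp.ofLp_toLp]
      rw [Prod.mk.injEq]
      constructor
      · ext j
        simp only [WithLp.ofLp_toLp]
        rcases min_eq_iff.mp (hzero j) with ⟨h1, _⟩ | ⟨h1, _⟩
        · have ha0 : a j = 0 := by nlinarith [sq_nonneg (a j)]
          rw [ha0, max_eq_right (by nlinarith [sq_nonneg (b j)] : (0:ℝ)^2 - b j ^2 ≤ 0),
            Real.sqrt_zero, mul_zero]
        · have hb0 : b j ^ 2 = 0 := h1
          rw [hb0, sub_zero, max_eq_left (sq_nonneg _), sign_sqrt_sq]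
      · ext j
        simp only [WithLp.ofLp_toLp]
        rcases min_eq_iff.mp (hzero j) with ⟨h1, _⟩ | ⟨h1, _⟩
        · have ha0 : a j ^ 2 = 0 := h1
          rw [ha0, zero_sub, neg_neg, max_eq_left (sq_nonneg _), sign_sqrt_sq]
        · have hb0 : b j = 0 := by nlinarith [sq_nonneg (b j)]
          rw [hb0, max_eq_right (by nlinarith [sq_nonneg (a j)] : -(a j ^ 2 - 0^2) ≤ 0),
            Real.sqrt_zero, mul_zero]
    have hgc : Continuous g := by
      apply Continuous.prodMk
      · refine (PiLp.continuous_toLp 2 _).comp ?_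
        apply continuous_pi
        intro j
        exact continuous_const.mul (Real.continuous_sqrt.comp ((PiLp.continuous_apply 2 _ j).max continuous_const))
      · refine (PiLp.continuous_toLp 2 _).comp ?_
        apply continuous_pi
        intro j
        exact continuous_const.mul (Real.continuous_sqrt.comp ((PiLp.continuous_apply 2 _ j).neg.max continuous_const))
    have htd : Filter.Tendsto g (nhds xb) (nhds (a, b)) := by
      have := hgc.continuousAt (x := xb)
      rw [ContinuousAt, hgxb] at this
      exact this
    have hev := htd.eventually hmin
    filter_upwards [hev] with x hx
    -- F (g x) = f x
    have hgq1 : ∀ j, ((g x).1 j) ^ 2 = max (x j) 0 := fun j =>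
      cond_sqrt_sq _ (le_max_right _ _)
    have hgq2 : ∀ j, ((g x).2 j) ^ 2 = max (-(x j)) 0 := fun j =>
      cond_sqrt_sq _ (le_max_right _ _)
    have hFg : h (WithLp.toLp 2 (fun j => (g x).1 j ^ 2 - (g x).2 j ^ 2) : EuclideanSpace ℝ (Fin n)) +
        μ * ∑ j, ((g x).1 j ^ 2 + (g x).2 j ^ 2) = h x + μ * ∑ j, |x j| := by
      have harg : (WithLp.toLp 2 (fun j => (g x).1 j ^ 2 - (g x).2 j ^ 2) : EuclideanSpace ℝ (Fin n)) = x := by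
        ext j
        simp only [WithLp.ofLp_toLp]
        rw [hgq1, hgq2, max_sub_max]
      have hs : ∑ j, ((g x).1 j ^ 2 + (g x).2 j ^ 2) = ∑ j, |x j| :=
        Finset.sum_congr rfl fun j _ => by rw [hgq1, hgq2, max_add_max]
      rw [harg, hs]
    have hx' : h (WithLp.toLp 2 (fun j => a j ^ 2 - b j ^ 2) : EuclideanSpace ℝ (Fin n)) + μ * ∑ j, (a j ^ 2 + b j ^ 2) ≤
        h (WithLp.toLp 2 (fun j => (g x).1 j ^ 2 - (g x).2 j ^ 2) : EuclideanSpace ℝ (Fin n)) +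
        μ * ∑ j, ((g x).1 j ^ 2 + (g x).2 j ^ 2) := hx
    rw [hFg] at hx'
    rw [hsumab] at hx'
    exact hx'
end

section
/- For any (a,b) ∈ ℝⁿ×ℝⁿ the following are equivalent: (i) the point s := a² − b² is a stationary point of f, min{aᵢ², bᵢ²} = 0 for every i, and the submatrix ∇²h(s)_{II} is positive semidefinite, where I = {i : sᵢ ≠ 0} (equivalently, ⟨w, ∇²h(s)w⟩ ≥ 0 for every w ∈ ℝⁿ with wᵢ = 0 for all i ∉ I); (ii) (a,b) is a second-order stationary point of F, i.e., ∇F(a,b) = 0 and the Hessian ∇²F(a,b) is positive semidefinite. -/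
open scoped BigOperators

open scoped BigOperators
open ContinuousLinearMap

variable {n : ℕ}
noncomputable abbrev E (n : ℕ) := EuclideanSpace ℝ (Fin n)

/-- the CLM (u,v) ↦ (fun i => c i * u i + d i * v i) -/
noncomputable def lin (c d : Fin n → ℝ) : (E n × E n) →L[ℝ] E n :=
  (PiLp.continuousLinearEquiv 2 ℝ (fun _ : Fin n => ℝ)).symm.toContinuousLinearMap.comp
    (ContinuousLinearMap.pi fun i =>
      c i • ((EuclideanSpace.proj i).comp (ContinuousLinearMap.fst ℝ (E n) (E n)))
      + d i • ((EuclideanSpace.proj i).comp (ContinuousLinearMap.snd ℝ (E n) (E n))))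

@[simp] lemma lin_apply (c d : Fin n → ℝ) (w : E n × E n) (i : Fin n) :
    lin c d w i = c i * w.1 i + d i * w.2 i := rfl

noncomputable def A (i : Fin n) : (E n × E n) →L[ℝ] ℝ :=
  (EuclideanSpace.proj i).comp (ContinuousLinearMap.fst ℝ (E n) (E n))
noncomputable def B (i : Fin n) : (E n × E n) →L[ℝ] ℝ :=
  (EuclideanSpace.proj i).comp (ContinuousLinearMap.snd ℝ (E n) (E n))

@[simp] lemma A_apply (i : Fin n) (w : E n × E n) : A i w = w.1 i := rfl
@[simp] lemma B_apply (i : Fin n) (w : E n × E n) : B i w = w.2 i := rfl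

lemma lin_eq_pi (c d : Fin n → ℝ) : lin c d =
    (PiLp.continuousLinearEquiv 2 ℝ (fun _ : Fin n => ℝ)).symm.toContinuousLinearMap.comp
      (ContinuousLinearMap.pi fun i => c i • A i + d i • B i) := rfl

noncomputable def qmap : (E n × E n) → E n := fun p => WithLp.toLp 2 (fun i => p.1 i ^ 2 - p.2 i ^ 2)

@[simp] lemma qmap_apply (p : E n × E n) (i : Fin n) : qmap p i = p.1 i ^ 2 - p.2 i ^ 2 := rfl

lemma hasFDerivAt_q (p : E n × E n) :
    HasFDerivAt (qmap (n := n))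
      (lin (fun i => 2 * p.1 i) (fun i => -(2 * p.2 i))) p := by
  rw [lin_eq_pi]
  have step : HasFDerivAt (fun p : E n × E n => (fun i => p.1 i ^ 2 - p.2 i ^ 2 : Fin n → ℝ))
      (ContinuousLinearMap.pi fun i => (2 * p.1 i) • A i + (-(2 * p.2 i)) • B i) p := by
    apply hasFDerivAt_pi''
    intro i
    rw [ContinuousLinearMap.proj_pi]
    have h1 : HasFDerivAt (fun p : E n × E n => p.1 i * p.1 i - p.2 i * p.2 i)
        ((p.1 i • A i + p.1 i • A i) - (p.2 i • B i + p.2 i • B i)) p :=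
      ((A i).hasFDerivAt.mul (A i).hasFDerivAt).sub ((B i).hasFDerivAt.mul (B i).hasFDerivAt)
    have e2 : ((p.1 i • A i + p.1 i • A i) - (p.2 i • B i + p.2 i • B i))
        = (2 * p.1 i) • A i + (-(2 * p.2 i)) • B i := by
      ext w <;> simp [A, B] <;> ring
    simp only [pow_two]
    exact e2 ▸ h1
  exact ((PiLp.continuousLinearEquiv 2 ℝ (fun _ : Fin n => ℝ)).symm.toContinuousLinearMap.hasFDerivAt).comp p step

noncomputable def sqsum : (E n × E n) → ℝ := fun p => ∑ i, (p.1 i ^ 2 + p.2 i ^ 2)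

noncomputable def dsq (p : E n × E n) : (E n × E n) →L[ℝ] ℝ :=
  ∑ i, ((2 * p.1 i) • A i + (2 * p.2 i) • B i)

lemma hasFDerivAt_sqsum (p : E n × E n) :
    HasFDerivAt (sqsum (n := n)) (dsq p) p := by
  apply HasFDerivAt.fun_sum
  intro i _
  have h1 : HasFDerivAt (fun p : E n × E n => p.1 i * p.1 i + p.2 i * p.2 i)
      ((p.1 i • A i + p.1 i • A i) + (p.2 i • B i + p.2 i • B i)) p :=
    ((A i).hasFDerivAt.mul (A i).hasFDerivAt).add ((B i).hasFDerivAt.mul (B i).hasFDerivAt)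
  have e2 : ((p.1 i • A i + p.1 i • A i) + (p.2 i • B i + p.2 i • B i))
      = (2 * p.1 i) • A i + (2 * p.2 i) • B i := by
    ext w <;> simp [A, B] <;> ring
  simp only [pow_two]
  exact e2 ▸ h1

variable (h : E n → ℝ) (μ : ℝ)

noncomputable def DF (h : E n → ℝ) (μ : ℝ) (p : E n × E n) : (E n × E n) →L[ℝ] ℝ :=
  (fderiv ℝ h (qmap p)).comp (lin (fun i => 2 * p.1 i) (fun i => -(2 * p.2 i))) + μ • dsq p

lemma hasFDerivAt_F (hh : ContDiff ℝ 2 h) (p : E n × E n) :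
    HasFDerivAt (fun p => h (qmap p) + μ * sqsum p) (DF h μ p) p := by
  have hhd : HasFDerivAt h (fderiv ℝ h (qmap p)) (qmap p) :=
    ((hh.differentiable (by norm_num)) (qmap p)).hasFDerivAt
  exact (hhd.comp p (hasFDerivAt_q p)).add ((hasFDerivAt_sqsum p).const_mul μ)

lemma fderiv_F_eq (hh : ContDiff ℝ 2 h) (p : E n × E n) :
    fderiv ℝ (fun p => h (qmap p) + μ * sqsum p) p = DF h μ p :=
  (hasFDerivAt_F h μ hh p).fderiv

lemma contDiff_qmap : ContDiff ℝ 2 (qmap (n := n)) := by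
  apply ContDiff.comp
    ((PiLp.continuousLinearEquiv 2 ℝ (fun _ : Fin n => ℝ)).symm.contDiff)
  exact contDiff_pi.2 fun i => ((A i).contDiff.pow 2).sub ((B i).contDiff.pow 2)

lemma contDiff_F (hh : ContDiff ℝ 2 h) :
    ContDiff ℝ 2 (fun p => h (qmap p) + μ * sqsum p) := by
  refine (hh.comp contDiff_qmap).add (contDiff_const.mul ?_)
  exact ContDiff.sum fun i _ => ((A i).contDiff.pow 2).add ((B i).contDiff.pow 2)

noncomputable def Tw (μ : ℝ) (w : E n × E n) : (E n × E n) →L[ℝ] ℝ :=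
  ∑ i, ((2 * μ * w.1 i) • A i + (2 * μ * w.2 i) • B i)

lemma hasFDerivAt_DFw (hh : ContDiff ℝ 2 h) (a b : E n) (w : E n × E n) :
    HasFDerivAt (fun p => DF h μ p w)
      (((fderiv ℝ h (qmap (a,b))).comp
          (lin (fun i => 2 * w.1 i) (fun i => -(2 * w.2 i)))
        + ((fderiv ℝ (fderiv ℝ h) (qmap (a,b))).comp
            (lin (fun i => 2 * a i) (fun i => -(2 * b i)))).flip
            (lin (fun i => 2 * a i) (fun i => -(2 * b i)) w))
        + Tw μ w) (a, b) := by
  have hD2 : HasFDerivAt (fderiv ℝ h) (fderiv ℝ (fderiv ℝ h) (qmap (a,b))) (qmap (a,b)) :=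
    (((hh.fderiv_right (m := 1) (by norm_num)).differentiable one_ne_zero) (qmap (a,b))).hasFDerivAt
  have hc : HasFDerivAt (fun p : E n × E n => fderiv ℝ h (qmap p))
      ((fderiv ℝ (fderiv ℝ h) (qmap (a,b))).comp
        (lin (fun i => 2 * a i) (fun i => -(2 * b i)))) (a, b) :=
    hD2.comp (a, b) (hasFDerivAt_q (a, b))
  have hu : HasFDerivAt
      (fun p : E n × E n => lin (fun i => 2 * p.1 i) (fun i => -(2 * p.2 i)) w)
      (lin (fun i => 2 * w.1 i) (fun i => -(2 * w.2 i))) (a, b) := by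
    have : (fun p : E n × E n => lin (fun i => 2 * p.1 i) (fun i => -(2 * p.2 i)) w)
        = ⇑(lin (fun i => 2 * w.1 i) (fun i => -(2 * w.2 i))) := by
      funext p; ext i; simp; ring
    rw [this]
    exact (lin _ _).hasFDerivAt
  have h1 := hc.clm_apply hu
  have h2 : HasFDerivAt (fun p : E n × E n => μ * dsq p w) (Tw μ w) (a, b) := by
    have : (fun p : E n × E n => μ * dsq p w) = ⇑(Tw μ w) := by
      funext p
      simp only [dsq, Tw, ContinuousLinearMap.sum_apply, Finset.mul_sum,
        ContinuousLinearMap.add_apply, ContinuousLinearMap.smul_apply, A_apply, B_apply,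
        smul_eq_mul]
      refine Finset.sum_congr rfl fun i _ => by ring
    rw [this]
    exact (Tw μ w).hasFDerivAt
  have h3 := h1.add h2
  have key : (fun p : E n × E n => DF h μ p w)
      = fun p => (fderiv ℝ h (qmap p))
          (lin (fun i => 2 * p.1 i) (fun i => -(2 * p.2 i)) w) + μ * dsq p w := by
    funext p; simp [DF]
  rw [key]; exact h3

lemma fderiv_apply_eq_sum (x ζ : E n) :
    fderiv ℝ h x ζ = ∑ i, gradient h x i * ζ i := by
  have h1 : @inner ℝ (E n) _ (gradient h x) ζ = fderiv ℝ h x ζ :=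
    InnerProductSpace.toDual_symm_apply
  rw [← h1, PiLp.inner_apply]
  simp [RCLike.inner_apply, conj_trivial]
  exact Finset.sum_congr rfl fun i _ => mul_comm _ _

lemma D1_eq (hh : ContDiff ℝ 2 h) (a b : E n) (w : E n × E n) :
    fderiv ℝ (fun p => h (qmap p) + μ * sqsum p) (a, b) w =
      ∑ i, (2 * a i * (gradient h (qmap (a, b)) i + μ) * w.1 i
          + 2 * b i * (μ - gradient h (qmap (a, b)) i) * w.2 i) := by
  rw [fderiv_F_eq h μ hh]
  simp only [DF, ContinuousLinearMap.add_apply, ContinuousLinearMap.comp_apply,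
    ContinuousLinearMap.smul_apply, smul_eq_mul, dsq, ContinuousLinearMap.sum_apply,
    ContinuousLinearMap.add_apply, ContinuousLinearMap.smul_apply, A_apply, B_apply]
  rw [fderiv_apply_eq_sum, Finset.mul_sum, ← Finset.sum_add_distrib]
  refine Finset.sum_congr rfl fun i _ => ?_
  simp only [lin_apply, smul_eq_mul]
  ring

lemma D2_eq (hh : ContDiff ℝ 2 h) (a b : E n) (w : E n × E n) :
    iteratedFDeriv ℝ 2 (fun p => h (qmap p) + μ * sqsum p) (a, b) (fun _ => w) =
      iteratedFDeriv ℝ 2 h (qmap (a, b))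
        (fun _ => lin (fun i => 2 * a i) (fun i => -(2 * b i)) w)
      + ∑ i, (2 * (gradient h (qmap (a, b)) i + μ) * w.1 i ^ 2
            + 2 * (μ - gradient h (qmap (a, b)) i) * w.2 i ^ 2) := by
  have hdF : fderiv ℝ (fun p => h (qmap p) + μ * sqsum p) = DF h μ :=
    funext (fderiv_F_eq h μ hh)
  have hdiff : DifferentiableAt ℝ (DF h μ) (a, b) := by
    rw [← hdF]
    exact (((contDiff_F h μ hh).fderiv_right (m := 1) (by norm_num)).differentiable one_ne_zero).differentiableAt
  rw [iteratedFDeriv_two_apply, hdF]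
  have happ : fderiv ℝ (fun p => DF h μ p w) (a, b) = (fderiv ℝ (DF h μ) (a, b)).flip w := by
    rw [fderiv_clm_apply hdiff (differentiableAt_const w)]
    rw [show fderiv ℝ (fun _ : E n × E n => w) (a, b) = 0 from fderiv_const_apply w]
    simp
  have hval : fderiv ℝ (DF h μ) (a, b) w w = fderiv ℝ (fun p => DF h μ p w) (a, b) w := by
    rw [happ]; rfl
  show fderiv ℝ (DF h μ) (a, b) w w = _
  rw [hval, (hasFDerivAt_DFw h μ hh a b w).fderiv]
  have hz : iteratedFDeriv ℝ 2 h (qmap (a, b))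
        (fun _ => lin (fun i => 2 * a i) (fun i => -(2 * b i)) w)
      = fderiv ℝ (fderiv ℝ h) (qmap (a, b))
          (lin (fun i => 2 * a i) (fun i => -(2 * b i)) w)
          (lin (fun i => 2 * a i) (fun i => -(2 * b i)) w) := by
    rw [iteratedFDeriv_two_apply]
  rw [hz]
  simp only [ContinuousLinearMap.add_apply, ContinuousLinearMap.comp_apply,
    ContinuousLinearMap.flip_apply, Tw, ContinuousLinearMap.sum_apply,
    ContinuousLinearMap.smul_apply, A_apply, B_apply, smul_eq_mul]
  rw [fderiv_apply_eq_sum]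
  rw [show ∀ x y z : ℝ, x + y + z = y + (x + z) from fun x y z => by ring]
  congr 1
  rw [← Finset.sum_add_distrib]
  refine Finset.sum_congr rfl fun i _ => ?_
  simp only [lin_apply]
  ring


set_option maxHeartbeats 2000000 in
/-- `(a,b)` is a second-order stationary point of `F`
(`∇F(a,b) = 0` and `∇²F(a,b) ⪰ 0`) iff `s := a² − b²` is a stationary point of `f`,
`min{aᵢ², bᵢ²} = 0` for every `i`, and `∇²h(s)_{II} ⪰ 0` where `I = {i : sᵢ ≠ 0}`
(i.e., `⟨w, ∇²h(s)w⟩ ≥ 0` whenever `wᵢ = 0` for all `i ∉ I`). -/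
theorem stmt7 (n : ℕ) (hn : 0 < n)
    (h : EuclideanSpace ℝ (Fin n) → ℝ) (hh : ContDiff ℝ 2 h)
    (μ : ℝ) (hμ : 0 < μ)
    (F : EuclideanSpace ℝ (Fin n) × EuclideanSpace ℝ (Fin n) → ℝ)
    (hF : F = fun p =>
      h (WithLp.toLp 2 (fun i => p.1 i ^ 2 - p.2 i ^ 2)) + μ * ∑ i, (p.1 i ^ 2 + p.2 i ^ 2))
    (a b : EuclideanSpace ℝ (Fin n))
    (s : EuclideanSpace ℝ (Fin n)) (hs : s = WithLp.toLp 2 (fun i => a i ^ 2 - b i ^ 2)) :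
    ((∀ i : Fin n,
        (s i ≠ 0 → gradient h s i = -μ * Real.sign (s i)) ∧
        (s i = 0 → gradient h s i ∈ Set.Icc (-μ) μ)) ∧
      (∀ i : Fin n, min (a i ^ 2) (b i ^ 2) = 0) ∧
      (∀ w : EuclideanSpace ℝ (Fin n), (∀ i, s i = 0 → w i = 0) →
        0 ≤ iteratedFDeriv ℝ 2 h s (fun _ => w))) ↔
    (fderiv ℝ F (a, b) = 0 ∧
      ∀ w : EuclideanSpace ℝ (Fin n) × EuclideanSpace ℝ (Fin n),
        0 ≤ iteratedFDeriv ℝ 2 F (a, b) (fun _ => w)) := by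
  have hF' : F = fun p => h (qmap p) + μ * sqsum p := hF
  have hq : qmap (a, b) = s := hs.symm
  set g : E n := gradient h s with hg
  have D1 : ∀ w : E n × E n, fderiv ℝ F (a, b) w =
      ∑ i, (2 * a i * (g i + μ) * w.1 i + 2 * b i * (μ - g i) * w.2 i) := by
    intro w
    rw [hF', D1_eq h μ hh a b w, hq]
  have D2 : ∀ w : E n × E n, iteratedFDeriv ℝ 2 F (a, b) (fun _ => w) =
      iteratedFDeriv ℝ 2 h s
        (fun _ => lin (fun i => 2 * a i) (fun i => -(2 * b i)) w)
      + ∑ i, (2 * (g i + μ) * w.1 i ^ 2 + 2 * (μ - g i) * w.2 i ^ 2) := by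
    intro w
    rw [hF', D2_eq h μ hh a b w, hq]
  have sumsingle1 : ∀ (c : Fin n → ℝ) (i : Fin n),
      (∑ j, c j * (EuclideanSpace.single i (1:ℝ)) j) = c i := by
    intro c i
    rw [Finset.sum_eq_single i]
    · simp [EuclideanSpace.single_apply]
    · intro j _ hj
      simp [EuclideanSpace.single_apply, hj]
    · intro hi; exact absurd (Finset.mem_univ i) hi
  constructor
  · rintro ⟨Hstat, Hmin, Hpsd⟩
    -- basic consequences
    have hb : ∀ i, -μ ≤ g i ∧ g i ≤ μ := by
      intro i
      rcases eq_or_ne (s i) 0 with h0 | h0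
      · exact ⟨((Hstat i).2 h0).1, ((Hstat i).2 h0).2⟩
      · have hgi := (Hstat i).1 h0
        rcases lt_or_gt_of_ne h0 with hlt | hgt
        · rw [Real.sign_of_neg hlt] at hgi
          constructor <;> nlinarith
        · rw [Real.sign_of_pos hgt] at hgi
          constructor <;> nlinarith
    have hz : ∀ i, s i = 0 → a i = 0 ∧ b i = 0 := by
      intro i h0
      have hsi : a i ^ 2 - b i ^ 2 = 0 := by have e : s i = a i ^ 2 - b i ^ 2 := congrArg (fun x : E n => x i) hs; rw [← e]; exact h0
      rcases min_eq_iff.1 (Hmin i) with ⟨ha0, _⟩ | ⟨hb0, _⟩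
      · have hb2 : b i ^ 2 = 0 := by nlinarith
        exact ⟨pow_eq_zero_iff (by norm_num : (2:ℕ) ≠ 0) |>.1 ha0,
          pow_eq_zero_iff (by norm_num : (2:ℕ) ≠ 0) |>.1 hb2⟩
      · have ha2 : a i ^ 2 = 0 := by nlinarith
        exact ⟨pow_eq_zero_iff (by norm_num : (2:ℕ) ≠ 0) |>.1 ha2,
          pow_eq_zero_iff (by norm_num : (2:ℕ) ≠ 0) |>.1 hb0⟩
    have hpos : ∀ i, 0 < s i → b i = 0 ∧ g i = -μ := by
      intro i h0
      have hgi := (Hstat i).1 (ne_of_gt h0)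
      rw [Real.sign_of_pos h0] at hgi
      have hsi : s i = a i ^ 2 - b i ^ 2 := congrArg (fun x : E n => x i) hs
      have hb2 : b i ^ 2 = 0 := by
        rcases min_eq_iff.1 (Hmin i) with ⟨ha0, _⟩ | ⟨hb0, _⟩
        · nlinarith
        · exact hb0
      exact ⟨by nlinarith, by linarith [hgi]⟩
    have hneg : ∀ i, s i < 0 → a i = 0 ∧ g i = μ := by
      intro i h0
      have hgi := (Hstat i).1 (ne_of_lt h0)
      rw [Real.sign_of_neg h0] at hgi
      have hsi : s i = a i ^ 2 - b i ^ 2 := congrArg (fun x : E n => x i) hs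
      have ha2 : a i ^ 2 = 0 := by
        rcases min_eq_iff.1 (Hmin i) with ⟨ha0, _⟩ | ⟨hb0, _⟩
        · exact ha0
        · nlinarith
      exact ⟨by nlinarith, by linarith [hgi]⟩
    constructor
    · apply ContinuousLinearMap.ext
      intro w
      rw [D1 w]
      rw [ContinuousLinearMap.zero_apply]
      apply Finset.sum_eq_zero
      intro i _
      rcases lt_trichotomy (s i) 0 with h0 | h0 | h0
      · obtain ⟨ha0, hg0⟩ := hneg i h0
        rw [ha0, hg0]; ring
      · obtain ⟨ha0, hb0⟩ := hz i h0
        rw [ha0, hb0]; ring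
      · obtain ⟨hb0, hg0⟩ := hpos i h0
        rw [hb0, hg0]; ring
    · intro w
      rw [D2 w]
      have t1 : 0 ≤ iteratedFDeriv ℝ 2 h s
          (fun _ => lin (fun i => 2 * a i) (fun i => -(2 * b i)) w) := by
        apply Hpsd
        intro i h0
        obtain ⟨ha0, hb0⟩ := hz i h0
        simp [lin_apply, ha0, hb0]
      have t2 : 0 ≤ ∑ i, (2 * (g i + μ) * w.1 i ^ 2 + 2 * (μ - g i) * w.2 i ^ 2) := by
        apply Finset.sum_nonneg
        intro i _
        have := hb i
        nlinarith [sq_nonneg (w.1 i), sq_nonneg (w.2 i)]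
      linarith
  · rintro ⟨Hf0, Hpsd⟩
    have D1z : ∀ w : E n × E n,
        (∑ i, (2 * a i * (g i + μ) * w.1 i + 2 * b i * (μ - g i) * w.2 i)) = 0 := by
      intro w
      rw [← D1 w, Hf0, ContinuousLinearMap.zero_apply]
    have e1 : ∀ i, 2 * a i * (g i + μ) = 0 := by
      intro i
      have := D1z (EuclideanSpace.single i (1:ℝ), 0)
      simpa [sumsingle1 (fun j => 2 * a j * (g j + μ)) i] using this
    have e2 : ∀ i, 2 * b i * (μ - g i) = 0 := by
      intro i
      have := D1z (0, EuclideanSpace.single i (1:ℝ))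
      simpa [sumsingle1 (fun j => 2 * b j * (μ - g j)) i] using this
    have ha' : ∀ i, a i ≠ 0 → g i = -μ := by
      intro i hai
      have := e1 i
      have h2 : a i * (g i + μ) = 0 := by linarith
      rcases mul_eq_zero.1 h2 with h3 | h3
      · exact absurd h3 hai
      · linarith
    have hb' : ∀ i, b i ≠ 0 → g i = μ := by
      intro i hbi
      have := e2 i
      have h2 : b i * (μ - g i) = 0 := by linarith
      rcases mul_eq_zero.1 h2 with h3 | h3
      · exact absurd h3 hbi
      · linarith
    have hnotboth : ∀ i, a i = 0 ∨ b i = 0 := by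
      intro i
      by_contra hcon
      push_neg at hcon
      have h1 := ha' i hcon.1
      have h2 := hb' i hcon.2
      linarith
    have hmin : ∀ i : Fin n, min (a i ^ 2) (b i ^ 2) = 0 := by
      intro i
      rcases hnotboth i with h0 | h0
      · rw [h0]
        simpa using sq_nonneg (b i)
      · rw [h0]
        simpa using sq_nonneg (a i)
    have hz0 : ∀ i, s i = 0 → a i = 0 ∧ b i = 0 := by
      intro i h0
      have hsi : s i = a i ^ 2 - b i ^ 2 := congrArg (fun x : E n => x i) hs
      rcases hnotboth i with h1 | h1
      · exact ⟨h1, by nlinarith⟩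
      · exact ⟨by nlinarith, h1⟩
    refine ⟨?_, hmin, ?_⟩
    · intro i
      constructor
      · intro h0
        rcases lt_or_gt_of_ne h0 with hlt | hgt
        · have hsi : s i = a i ^ 2 - b i ^ 2 := congrArg (fun x : E n => x i) hs
          have hbi : b i ≠ 0 := by
            intro hb0
            rw [hb0] at hsi
            nlinarith
          rw [Real.sign_of_neg hlt, hb' i hbi]; ring
        · have hsi : s i = a i ^ 2 - b i ^ 2 := congrArg (fun x : E n => x i) hs
          have hai : a i ≠ 0 := by
            intro ha0
            rw [ha0] at hsi
            nlinarith
          rw [Real.sign_of_pos hgt, ha' i hai]; ring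
      · intro h0
        obtain ⟨ha0, hb0⟩ := hz0 i h0
        have key : ∀ u v : E n,
            (∀ j, lin (fun k => 2 * a k) (fun k => -(2 * b k)) (u, v) j = 0) →
            0 ≤ ∑ j, (2 * (g j + μ) * u j ^ 2 + 2 * (μ - g j) * v j ^ 2) := by
          intro u v hzz
          have := Hpsd (u, v)
          rw [D2 (u, v)] at this
          have hzf : (lin (fun k => 2 * a k) (fun k => -(2 * b k)) (u, v)) = (0 : E n) :=
            PiLp.ext hzz
          rw [hzf] at this
          have : (0:ℝ) ≤ 0 + ∑ j, (2 * (g j + μ) * u j ^ 2 + 2 * (μ - g j) * v j ^ 2) := by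
            rw [show (fun _ : Fin 2 => (0 : E n)) = 0 from rfl] at this
            rw [(iteratedFDeriv ℝ 2 h s).map_zero] at this
            exact this
          linarith
        constructor
        · -- -μ ≤ g i  using u = single i 1
          have hk := key (EuclideanSpace.single i (1:ℝ)) 0 ?_
          · have hsum : ∑ j, (2 * (g j + μ) * (EuclideanSpace.single i (1:ℝ)) j ^ 2
                + 2 * (μ - g j) * (0 : E n) j ^ 2) = 2 * (g i + μ) := by
              rw [Finset.sum_eq_single i]
              · simp [EuclideanSpace.single_apply]
              · intro j _ hj
                simp [EuclideanSpace.single_apply, hj]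
              · intro hi; exact absurd (Finset.mem_univ i) hi
            rw [hsum] at hk
            linarith
          · intro j
            rcases eq_or_ne j i with rfl | hj
            · simp [lin_apply, ha0, EuclideanSpace.single_apply]
            · simp [lin_apply, EuclideanSpace.single_apply, hj]
        · have hk := key 0 (EuclideanSpace.single i (1:ℝ)) ?_
          · have hsum : ∑ j, (2 * (g j + μ) * (0 : E n) j ^ 2
                + 2 * (μ - g j) * (EuclideanSpace.single i (1:ℝ)) j ^ 2) = 2 * (μ - g i) := by
              rw [Finset.sum_eq_single i]
              · simp [EuclideanSpace.single_apply]
              · intro j _ hj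
                simp [EuclideanSpace.single_apply, hj]
              · intro hi; exact absurd (Finset.mem_univ i) hi
            rw [hsum] at hk
            linarith
          · intro j
            rcases eq_or_ne j i with rfl | hj
            · simp [lin_apply, hb0, EuclideanSpace.single_apply]
            · simp [lin_apply, EuclideanSpace.single_apply, hj]
    · -- PSD of h on I
      intro w hw
      classical
      obtain ⟨u, hu⟩ : ∃ u : E n, ∀ i, u i = if 0 < s i then w i / (2 * a i) else 0 :=
        ⟨WithLp.toLp 2 (fun i => if 0 < s i then w i / (2 * a i) else 0), fun i => rfl⟩
      obtain ⟨v, hv⟩ : ∃ v : E n, ∀ i, v i = if s i < 0 then -(w i / (2 * b i)) else 0 :=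
        ⟨WithLp.toLp 2 (fun i => if s i < 0 then -(w i / (2 * b i)) else 0), fun i => rfl⟩
      have hb0pos : ∀ i, 0 < s i → b i = 0 ∧ a i ≠ 0 := by
        intro i h0
        have hsi : s i = a i ^ 2 - b i ^ 2 := congrArg (fun x : E n => x i) hs
        have hai : a i ≠ 0 := by
          intro ha0; rw [ha0] at hsi; nlinarith
        rcases hnotboth i with h1 | h1
        · exact absurd h1 hai
        · exact ⟨h1, hai⟩
      have ha0neg : ∀ i, s i < 0 → a i = 0 ∧ b i ≠ 0 := by
        intro i h0
        have hsi : s i = a i ^ 2 - b i ^ 2 := congrArg (fun x : E n => x i) hs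
        have hbi : b i ≠ 0 := by
          intro hb0; rw [hb0] at hsi; nlinarith
        rcases hnotboth i with h1 | h1
        · exact ⟨h1, hbi⟩
        · exact absurd h1 hbi
      have hzw : lin (fun k => 2 * a k) (fun k => -(2 * b k)) (u, v) = w := by
        ext i
        simp only [lin_apply]
        rcases lt_trichotomy (s i) 0 with h0 | h0 | h0
        · obtain ⟨ha0, hbi⟩ := ha0neg i h0
          rw [hu i, if_neg (not_lt.2 h0.le), hv i, if_pos h0]
          field_simp
          ring
        · have hw0 := hw i h0
          rw [hu i, if_neg (by rw [h0]; exact lt_irrefl 0), hv i,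
            if_neg (by rw [h0]; exact lt_irrefl 0), hw0]
          ring
        · obtain ⟨hb0, hai⟩ := hb0pos i h0
          rw [hu i, if_pos h0, hv i, if_neg (not_lt.2 h0.le)]
          field_simp
          ring
      have := Hpsd (u, v)
      rw [D2 (u, v), hzw] at this
      have hsum0 : ∑ i, (2 * (g i + μ) * u i ^ 2 + 2 * (μ - g i) * v i ^ 2) = 0 := by
        apply Finset.sum_eq_zero
        intro i _
        rcases lt_trichotomy (s i) 0 with h0 | h0 | h0
        · obtain ⟨ha0, hbi⟩ := ha0neg i h0
          have hui : u i = 0 := by rw [hu i, if_neg (not_lt.2 h0.le)]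
          have hgi : g i = μ := hb' i hbi
          rw [hui, hgi]; ring
        · have hui : u i = 0 := by
            rw [hu i, if_neg (by rw [h0]; exact lt_irrefl 0)]
          have hvi : v i = 0 := by
            rw [hv i, if_neg (by rw [h0]; exact lt_irrefl 0)]
          rw [hui, hvi]; ring
        · obtain ⟨hb0, hai⟩ := hb0pos i h0
          have hvi : v i = 0 := by rw [hv i, if_neg (not_lt.2 h0.le)]
          have hgi : g i = -μ := ha' i hai
          rw [hvi, hgi]; ring
      rw [hsum0] at this
      linarith
end

section
/- Suppose h is convex. Then there exists δ > 0 such that for every (a,b) ∈ ℝⁿ×ℝⁿ the following statements are equivalent: (i) ∇F(a,b) = 0 and λ_min(∇²F(a,b)) > −δ (i.e., D²F(a,b)[(u,v),(u,v)] > −δ‖(u,v)‖² for every nonzero (u,v) ∈ ℝⁿ×ℝⁿ); (ii) the point a² − b² is a global minimizer of f and min{aᵢ², bᵢ²} = 0 for every i; (iii) (a,b) is a global minimizer of F; (iv) (a,b) is a second-order stationary point of F, i.e., ∇F(a,b) = 0 and ∇²F(a,b) is positive semidefinite. -/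
open scoped BigOperators

noncomputable section StrictSaddleAux

variable {n : ℕ}
local notation "E" => EuclideanSpace ℝ (Fin n)


theorem clm_decomp (L : E →L[ℝ] ℝ) (z : E) : L z = ∑ i, z i * L (EuclideanSpace.single i 1) := by
  have hz : z = ∑ i, z i • EuclideanSpace.single i (1:ℝ) := by
    ext j
    rw [WithLp.ofLp_sum, Finset.sum_apply]
    simp [EuclideanSpace.single_apply]
  conv_lhs => rw [hz]
  rw [map_sum]
  simp [smul_eq_mul]

/-- gradient inequality for a differentiable convex function -/
theorem grad_ineq (h : E → ℝ) (hd : Differentiable ℝ h) (hconv : ConvexOn ℝ Set.univ h)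
    (x y : E) : h x + fderiv ℝ h x (y - x) ≤ h y := by
  set φ : ℝ → ℝ := fun t => h (x + t • (y - x)) with hφ
  have hγ : ∀ t : ℝ, HasDerivAt (fun s : ℝ => x + s • (y - x)) (y - x) t := by
    intro t
    simpa using ((hasDerivAt_id t).smul_const (y - x)).const_add x
  have hφd : ∀ t : ℝ, HasDerivAt φ (fderiv ℝ h (x + t • (y - x)) (y - x)) t := fun t =>
    (hd _).hasFDerivAt.comp_hasDerivAt t (hγ t)
  have hφconv : ConvexOn ℝ Set.univ φ := by
    have h2 := hconv.comp_affineMap (AffineMap.lineMap x y : ℝ →ᵃ[ℝ] E)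
    have : φ = (h ∘ (AffineMap.lineMap x y : ℝ →ᵃ[ℝ] E)) := by
      funext t
      simp only [hφ, Function.comp_apply, AffineMap.coe_lineMap, AffineMap.lineMap_apply,
        vsub_eq_sub, vadd_eq_add]
      rw [add_comm]
    rw [this]
    simpa using h2
  have key := hφconv.le_slope_of_hasDerivAt (Set.mem_univ (0:ℝ)) (Set.mem_univ (1:ℝ)) one_pos
    (by simpa using hφd 0)
  have : slope φ 0 1 = φ 1 - φ 0 := by simp [slope_def_field]
  rw [this] at key
  have h0 : φ 0 = h x := by simp [hφ]
  have h1 : φ 1 = h y := by simp [hφ]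
  rw [h0, h1] at key
  simpa using by linarith [key]

/-- a subgradient of a differentiable function is the derivative -/
theorem subgrad_unique (h : E → ℝ) (hd : Differentiable ℝ h) (x : E) (c : E →L[ℝ] ℝ)
    (hc : ∀ z, h x + c (z - x) ≤ h z) : fderiv ℝ h x = c := by
  ext w
  set ψ : ℝ → ℝ := fun t => h (x + t • w) - t * c w with hψ
  have hmin : ∀ t, ψ 0 ≤ ψ t := by
    intro t
    have := hc (x + t • w)
    simp only [hψ]
    simp only [add_sub_cancel_left, map_smul, smul_eq_mul] at this
    simp
    linarith
  have hγ : HasDerivAt (fun t : ℝ => x + t • w) w 0 := by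
    simpa using ((hasDerivAt_id (0:ℝ)).smul_const w).const_add x
  have hψd : HasDerivAt ψ (fderiv ℝ h x w - c w) 0 := by
    have h1 : HasDerivAt (fun t : ℝ => h (x + t • w)) (fderiv ℝ h x w) 0 := by
      have := (hd (x + (0:ℝ) • w)).hasFDerivAt.comp_hasDerivAt 0 hγ
      simpa [Function.comp_def] using this
    simpa [Pi.sub_def] using h1.sub ((hasDerivAt_id (0:ℝ)).mul_const (c w))
  have hloc : IsLocalMin ψ 0 := Filter.Eventually.of_forall hmin
  have := hloc.hasDerivAt_eq_zero hψd
  linarith [this]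

theorem fderiv_eq_of_flat (h : E → ℝ) (hd : Differentiable ℝ h) (hconv : ConvexOn ℝ Set.univ h)
    (x y : E) (hxy : fderiv ℝ h x (y - x) = fderiv ℝ h y (y - x)) :
    fderiv ℝ h x = fderiv ℝ h y := by
  have hm : x + (2:ℝ)⁻¹ • (y - x) = x + (2:ℝ)⁻¹ • (y - x) := rfl
  generalize hmdef : x + (2:ℝ)⁻¹ • (y - x) = m at hm ⊢
  have Gm := fderiv ℝ h m
  have hxm : x - m = -((2:ℝ)⁻¹ • (y - x)) := by rw [← hmdef]; abel
  have hym : y - m = (2:ℝ)⁻¹ • (y - x) := by rw [← hmdef]; module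
  have hmx : m - x = (2:ℝ)⁻¹ • (y - x) := by rw [← hmdef]; abel
  have e1 := grad_ineq h hd hconv x y
  have e2 := grad_ineq h hd hconv y x
  have e2' : fderiv ℝ h y (x - y) = -(fderiv ℝ h x (y - x)) := by
    rw [show x - y = -(y-x) by abel, map_neg, hxy]
  rw [e2'] at e2
  have hhy : h y = h x + fderiv ℝ h x (y - x) := by linarith
  have i1 := grad_ineq h hd hconv m x
  have i2 := grad_ineq h hd hconv m y
  have i3 := grad_ineq h hd hconv x m
  rw [hxm, map_neg, map_smul, smul_eq_mul] at i1
  rw [hym, map_smul, smul_eq_mul] at i2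
  rw [hmx, map_smul, smul_eq_mul] at i3
  have hmval : h m = h x + (2:ℝ)⁻¹ * fderiv ℝ h x (y - x) := by linarith
  have hcmc : fderiv ℝ h m (y - x) = fderiv ℝ h x (y - x) := by linarith
  have hsubx : ∀ z, h x + fderiv ℝ h m (z - x) ≤ h z := by
    intro z
    have hz := grad_ineq h hd hconv m z
    have hzm : fderiv ℝ h m (z - m) =
        fderiv ℝ h m (z - x) - (2:ℝ)⁻¹ * fderiv ℝ h x (y - x) := by
      rw [show z - m = (z - x) - (2:ℝ)⁻¹ • (y - x) by rw [← hmdef]; abel, map_sub, map_smul,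
        smul_eq_mul, hcmc]
    rw [hzm] at hz
    linarith
  have hsuby : ∀ z, h y + fderiv ℝ h m (z - y) ≤ h z := by
    intro z
    have hz := grad_ineq h hd hconv m z
    have hzm : fderiv ℝ h m (z - m) =
        fderiv ℝ h m (z - y) + (2:ℝ)⁻¹ * fderiv ℝ h x (y - x) := by
      rw [show z - m = (z - y) + (2:ℝ)⁻¹ • (y - x) by rw [← hmdef]; module, map_add, map_smul,
        smul_eq_mul, hcmc]
    rw [hzm] at hz
    linarith
  rw [subgrad_unique h hd x (fderiv ℝ h m) hsubx, subgrad_unique h hd y (fderiv ℝ h m) hsuby]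

def Xfun (n : ℕ) : (EuclideanSpace ℝ (Fin n) × EuclideanSpace ℝ (Fin n)) →
    EuclideanSpace ℝ (Fin n) := fun p => WithLp.toLp 2 (fun i => p.1 i ^ 2 - p.2 i ^ 2)

def Fd (n : ℕ) (h : EuclideanSpace ℝ (Fin n) → ℝ) (μ : ℝ) :
    (EuclideanSpace ℝ (Fin n) × EuclideanSpace ℝ (Fin n)) → ℝ :=
  fun p => h (Xfun n p) + μ * ∑ i, (p.1 i ^ 2 + p.2 i ^ 2)

/-- rewriting the first-coordinate slice -/
theorem slice_a_eq (h : E → ℝ) (μ : ℝ) (a b : E) (i : Fin n) :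
    (fun t : ℝ => Fd n h μ (a + t • EuclideanSpace.single i (1:ℝ), b)) =
    (fun t : ℝ => h (Xfun n (a, b) + (2 * a i * t + t ^ 2) • EuclideanSpace.single i (1:ℝ))
      + μ * ((∑ j, (a j ^ 2 + b j ^ 2)) + (2 * a i * t + t ^ 2))) := by
  funext t
  have hcoord : ∀ j, (a + t • EuclideanSpace.single i (1:ℝ)) j
      = a j + t * (if j = i then 1 else 0) := by
    intro j
    simp [EuclideanSpace.single_apply]
  simp only [Fd]
  congr 1
  · congr 1
    ext j
    have h1 : (Xfun n (a, b) + (2 * a i * t + t ^ 2) • EuclideanSpace.single i (1:ℝ)) j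
        = (a j ^ 2 - b j ^ 2) + (2 * a i * t + t ^ 2) * (if j = i then 1 else 0) := by
      simp [Xfun, EuclideanSpace.single_apply]
    rw [show (Xfun n (a + t • EuclideanSpace.single i (1:ℝ), b)) j
        = (a j + t * (if j = i then 1 else 0)) ^ 2 - b j ^ 2 by
      simp [Xfun, hcoord], h1]
    by_cases hj : j = i
    · subst hj; simp; ring
    · simp [hj]
  · congr 1
    have : ∀ j ∈ Finset.univ, (a + t • EuclideanSpace.single i (1:ℝ)) j ^ 2 + b j ^ 2
        = (a j ^ 2 + b j ^ 2) + (if j = i then 2 * a i * t + t ^ 2 else 0) := by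
      intro j _
      rw [hcoord j]
      by_cases hj : j = i
      · subst hj; simp; ring
      · simp [hj]
    rw [Finset.sum_congr rfl this, Finset.sum_add_distrib, Finset.sum_ite_eq' Finset.univ i]
    simp

theorem slice_b_eq (h : E → ℝ) (μ : ℝ) (a b : E) (i : Fin n) :
    (fun t : ℝ => Fd n h μ (a, b + t • EuclideanSpace.single i (1:ℝ))) =
    (fun t : ℝ => h (Xfun n (a, b) - (2 * b i * t + t ^ 2) • EuclideanSpace.single i (1:ℝ))
      + μ * ((∑ j, (a j ^ 2 + b j ^ 2)) + (2 * b i * t + t ^ 2))) := by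
  funext t
  have hcoord : ∀ j, (b + t • EuclideanSpace.single i (1:ℝ)) j
      = b j + t * (if j = i then 1 else 0) := by
    intro j
    simp [EuclideanSpace.single_apply]
  simp only [Fd]
  congr 1
  · congr 1
    ext j
    have h1 : (Xfun n (a, b) - (2 * b i * t + t ^ 2) • EuclideanSpace.single i (1:ℝ)) j
        = (a j ^ 2 - b j ^ 2) - (2 * b i * t + t ^ 2) * (if j = i then 1 else 0) := by
      simp [Xfun, EuclideanSpace.single_apply]
    rw [show (Xfun n (a, b + t • EuclideanSpace.single i (1:ℝ))) j
        = a j ^ 2 - (b j + t * (if j = i then 1 else 0)) ^ 2 by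
      simp [Xfun, hcoord], h1]
    by_cases hj : j = i
    · subst hj; simp; ring
    · simp [hj]
  · congr 1
    have : ∀ j ∈ Finset.univ, a j ^ 2 + (b + t • EuclideanSpace.single i (1:ℝ)) j ^ 2
        = (a j ^ 2 + b j ^ 2) + (if j = i then 2 * b i * t + t ^ 2 else 0) := by
      intro j _
      rw [hcoord j]
      by_cases hj : j = i
      · subst hj; simp; ring
      · simp [hj]
    rw [Finset.sum_congr rfl this, Finset.sum_add_distrib, Finset.sum_ite_eq' Finset.univ i]
    simp

/-- derivative of the scalar curve `t ↦ x + (2*c*t + t^2) • e` composed with `h`, at `0` -/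
theorem hasDerivAt_h_curve (h : E → ℝ) (hd : Differentiable ℝ h) (x : E) (c : ℝ) (e : E)
    (sgn : ℝ) :
    HasDerivAt (fun t : ℝ => h (x + (sgn * (2 * c * t + t ^ 2)) • e))
      (fderiv ℝ h x ((sgn * (2 * c)) • e)) 0 := by
  have hη : HasDerivAt (fun t : ℝ => sgn * (2 * c * t + t ^ 2)) (sgn * (2 * c)) 0 := by
    have h1 : HasDerivAt (fun t : ℝ => 2 * c * t + t ^ 2) (2 * c + 2 * 0 ^ (2-1)) 0 := by
      simpa [Pi.add_def] using ((hasDerivAt_id (0:ℝ)).const_mul (2*c)).add (hasDerivAt_pow 2 0)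
    simpa using h1.const_mul sgn
  have hγ : HasDerivAt (fun t : ℝ => x + (sgn * (2 * c * t + t ^ 2)) • e)
      ((sgn * (2 * c)) • e) 0 := by
    simpa using (hη.smul_const e).const_add x
  have := (hd (x + (sgn * (2 * c * 0 + 0 ^ 2)) • e)).hasFDerivAt.comp_hasDerivAt 0 hγ
  simpa [Function.comp_def] using this

/-- the `a`-slice derivative of `F` at `0` -/
theorem hasDerivAt_slice_a (h : E → ℝ) (hd : Differentiable ℝ h) (μ : ℝ) (a b : E) (i : Fin n) :
    HasDerivAt (fun t : ℝ => Fd n h μ (a + t • EuclideanSpace.single i (1:ℝ), b))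
      (2 * a i * (fderiv ℝ h (Xfun n (a, b)) (EuclideanSpace.single i (1:ℝ)) + μ)) 0 := by
  rw [slice_a_eq h μ a b i]
  have h1 := hasDerivAt_h_curve h hd (Xfun n (a,b)) (a i) (EuclideanSpace.single i (1:ℝ)) 1
  simp only [one_mul] at h1
  have h2 : HasDerivAt (fun t : ℝ => μ * ((∑ j, (a j ^ 2 + b j ^ 2)) + (2 * a i * t + t ^ 2)))
      (μ * (2 * a i)) 0 := by
    have : HasDerivAt (fun t : ℝ => (∑ j, (a j ^ 2 + b j ^ 2)) + (2 * a i * t + t ^ 2))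
        (2 * a i + 2 * 0 ^ (2-1)) 0 := by
      simpa using (((hasDerivAt_id (0:ℝ)).const_mul (2 * a i)).add (hasDerivAt_pow 2 0)).const_add
        (∑ j, (a j ^ 2 + b j ^ 2))
    simpa using this.const_mul μ
  have := h1.add h2
  rw [map_smul] at this
  refine this.congr_deriv ?_
  simp
  ring

/-- the `b`-slice derivative of `F` at `0` -/
theorem hasDerivAt_slice_b (h : E → ℝ) (hd : Differentiable ℝ h) (μ : ℝ) (a b : E) (i : Fin n) :
    HasDerivAt (fun t : ℝ => Fd n h μ (a, b + t • EuclideanSpace.single i (1:ℝ)))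
      (2 * b i * (μ - fderiv ℝ h (Xfun n (a, b)) (EuclideanSpace.single i (1:ℝ)))) 0 := by
  rw [slice_b_eq h μ a b i]
  have h1 := hasDerivAt_h_curve h hd (Xfun n (a,b)) (b i) (EuclideanSpace.single i (1:ℝ)) (-1)
  have heq : (fun t : ℝ => h (Xfun n (a,b) + ((-1) * (2 * b i * t + t ^ 2)) •
      EuclideanSpace.single i (1:ℝ)))
      = (fun t : ℝ => h (Xfun n (a,b) - (2 * b i * t + t ^ 2) •
        EuclideanSpace.single i (1:ℝ))) := by
    funext t; congr 1; module
  rw [heq] at h1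
  have h2 : HasDerivAt (fun t : ℝ => μ * ((∑ j, (a j ^ 2 + b j ^ 2)) + (2 * b i * t + t ^ 2)))
      (μ * (2 * b i)) 0 := by
    have : HasDerivAt (fun t : ℝ => (∑ j, (a j ^ 2 + b j ^ 2)) + (2 * b i * t + t ^ 2))
        (2 * b i + 2 * 0 ^ (2-1)) 0 := by
      simpa using (((hasDerivAt_id (0:ℝ)).const_mul (2 * b i)).add (hasDerivAt_pow 2 0)).const_add
        (∑ j, (a j ^ 2 + b j ^ 2))
    simpa using this.const_mul μ
  have := h1.add h2
  rw [map_smul] at this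
  refine this.congr_deriv ?_
  simp
  ring

theorem diff_Fd (h : E → ℝ) (hh : ContDiff ℝ 2 h) (μ : ℝ) : Differentiable ℝ (Fd n h μ) := by
  have : ContDiff ℝ 2 (Fd n h μ) := by
    unfold Fd Xfun
    refine (hh.comp ?_).add (contDiff_const.mul ?_)
    · refine contDiff_euclidean.mpr fun i => ?_
      exact ((((EuclideanSpace.proj i (𝕜 := ℝ)).contDiff).comp contDiff_fst).pow 2).sub
        ((((EuclideanSpace.proj i (𝕜 := ℝ)).contDiff).comp contDiff_snd).pow 2)
    · exact ContDiff.sum fun i _ =>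
        ((((EuclideanSpace.proj i (𝕜 := ℝ)).contDiff).comp contDiff_fst).pow 2).add
        ((((EuclideanSpace.proj i (𝕜 := ℝ)).contDiff).comp contDiff_snd).pow 2)
  exact this.differentiable (by norm_num)

theorem contDiff_Fd (h : E → ℝ) (hh : ContDiff ℝ 2 h) (μ : ℝ) : ContDiff ℝ 2 (Fd n h μ) := by
  unfold Fd Xfun
  refine (hh.comp ?_).add (contDiff_const.mul ?_)
  · refine contDiff_euclidean.mpr fun i => ?_
    exact ((((EuclideanSpace.proj i (𝕜 := ℝ)).contDiff).comp contDiff_fst).pow 2).sub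
      ((((EuclideanSpace.proj i (𝕜 := ℝ)).contDiff).comp contDiff_snd).pow 2)
  · exact ContDiff.sum fun i _ =>
      ((((EuclideanSpace.proj i (𝕜 := ℝ)).contDiff).comp contDiff_fst).pow 2).add
      ((((EuclideanSpace.proj i (𝕜 := ℝ)).contDiff).comp contDiff_snd).pow 2)

theorem hasDerivAt_line {Z : Type*} [NormedAddCommGroup Z] [NormedSpace ℝ Z]
    (G : Z → ℝ) (hd : Differentiable ℝ G) (p w : Z) :
    HasDerivAt (fun t : ℝ => G (p + t • w)) (fderiv ℝ G p w) 0 := by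
  have hγ : HasDerivAt (fun t : ℝ => p + t • w) w 0 := by
    simpa using ((hasDerivAt_id (0:ℝ)).smul_const w).const_add p
  have := (hd (p + (0:ℝ) • w)).hasFDerivAt.comp_hasDerivAt 0 hγ
  simpa [Function.comp_def] using this

theorem pair_line_a (a b u : E) : (fun t : ℝ => ((a, b) : E × E) + t • (u, 0))
    = fun t : ℝ => ((a + t • u, b) : E × E) := by
  funext t
  simp [Prod.ext_iff]

theorem pair_line_b (a b v : E) : (fun t : ℝ => ((a, b) : E × E) + t • (0, v))
    = fun t : ℝ => ((a, b + t • v) : E × E) := by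
  funext t
  simp [Prod.ext_iff]

theorem fderiv_Fd_a (h : E → ℝ) (hh : ContDiff ℝ 2 h) (μ : ℝ) (a b : E) (i : Fin n) :
    fderiv ℝ (Fd n h μ) (a, b) (EuclideanSpace.single i (1:ℝ), 0)
      = 2 * a i * (fderiv ℝ h (Xfun n (a, b)) (EuclideanSpace.single i (1:ℝ)) + μ) := by
  have h1 := hasDerivAt_line (Fd n h μ) (diff_Fd h hh μ) (a, b) (EuclideanSpace.single i (1:ℝ), 0)
  have heq : (fun t : ℝ => Fd n h μ ((a, b) + t • (EuclideanSpace.single i (1:ℝ), 0)))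
      = fun t : ℝ => Fd n h μ (a + t • EuclideanSpace.single i (1:ℝ), b) := by
    funext t; congr 1; simp [Prod.ext_iff]
  rw [heq] at h1
  exact h1.unique (hasDerivAt_slice_a h (hh.differentiable (by norm_num)) μ a b i)

theorem fderiv_Fd_b (h : E → ℝ) (hh : ContDiff ℝ 2 h) (μ : ℝ) (a b : E) (i : Fin n) :
    fderiv ℝ (Fd n h μ) (a, b) (0, EuclideanSpace.single i (1:ℝ))
      = 2 * b i * (μ - fderiv ℝ h (Xfun n (a, b)) (EuclideanSpace.single i (1:ℝ))) := by
  have h1 := hasDerivAt_line (Fd n h μ) (diff_Fd h hh μ) (a, b) (0, EuclideanSpace.single i (1:ℝ))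
  have heq : (fun t : ℝ => Fd n h μ ((a, b) + t • (0, EuclideanSpace.single i (1:ℝ))))
      = fun t : ℝ => Fd n h μ (a, b + t • EuclideanSpace.single i (1:ℝ)) := by
    funext t; congr 1; simp [Prod.ext_iff]
  rw [heq] at h1
  exact h1.unique (hasDerivAt_slice_b h (hh.differentiable (by norm_num)) μ a b i)

theorem second_slice {Z : Type*} [NormedAddCommGroup Z] [NormedSpace ℝ Z]
    (G : Z → ℝ) (hG : ContDiff ℝ 2 G) (p w : Z) :
    HasDerivAt (fun t : ℝ => fderiv ℝ G (p + t • w) w)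
      (iteratedFDeriv ℝ 2 G p (fun _ => w)) 0 := by
  rw [iteratedFDeriv_two_apply]
  have hd1 : Differentiable ℝ (fderiv ℝ G) :=
    (hG.fderiv_right (m := 1) (by norm_num)).differentiable (by norm_num)
  have hγ : HasDerivAt (fun t : ℝ => p + t • w) w 0 := by
    simpa using ((hasDerivAt_id (0:ℝ)).smul_const w).const_add p
  have h1 : HasDerivAt (fun t : ℝ => fderiv ℝ G (p + t • w))
      (fderiv ℝ (fderiv ℝ G) p w) 0 := by
    have := (hd1 (p + (0:ℝ) • w)).hasFDerivAt.comp_hasDerivAt 0 hγ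
    simpa [Function.comp_def] using this
  have := h1.clm_apply (hasDerivAt_const (0:ℝ) w)
  simpa using this

/-- second-order necessary condition at a global minimum -/
theorem second_order_nonneg {Z : Type*} [NormedAddCommGroup Z] [NormedSpace ℝ Z]
    (G : Z → ℝ) (hG : ContDiff ℝ 2 G) (p : Z) (hmin : ∀ q, G p ≤ G q) (w : Z) :
    0 ≤ iteratedFDeriv ℝ 2 G p (fun _ => w) := by
  by_contra hneg
  push_neg at hneg
  have hdiff : Differentiable ℝ G := hG.differentiable (by norm_num)
  have hfd0 : fderiv ℝ G p = 0 :=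
    (IsLocalMin.fderiv_eq_zero (Filter.Eventually.of_forall fun q => hmin q))
  set ψ : ℝ → ℝ := fun t => fderiv ℝ G (p + t • w) w with hψ
  have hψd : HasDerivAt ψ (iteratedFDeriv ℝ 2 G p (fun _ => w)) 0 := second_slice G hG p w
  have hψ0 : ψ 0 = 0 := by simp [hψ, hfd0]
  -- slopes are eventually negative on the right
  have hslope := hasDerivAt_iff_tendsto_slope.mp hψd
  have hev : ∀ᶠ t in nhdsWithin (0:ℝ) (Set.Ioi 0), slope ψ 0 t < 0 := by
    have h1 : ∀ᶠ t in nhdsWithin (0:ℝ) {(0:ℝ)}ᶜ, slope ψ 0 t < 0 :=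
      hslope.eventually_lt_const hneg
    exact h1.filter_mono (nhdsWithin_mono _ (fun t ht => Set.mem_compl (by
      simp only [Set.mem_singleton_iff]
      exact ne_of_gt ht)))
  obtain ⟨u, hu, hIoo⟩ := mem_nhdsGT_iff_exists_Ioo_subset.mp hev
  have hu0 : (0:ℝ) < u := hu
  have hψneg : ∀ t ∈ Set.Ioo (0:ℝ) u, ψ t < 0 := by
    intro t ht
    have h4 : slope ψ 0 t < 0 := hIoo ht
    rw [slope_def_field, hψ0, sub_zero, sub_zero] at h4
    have := mul_neg_of_neg_of_pos h4 ht.1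
    rwa [div_mul_cancel₀ _ (ne_of_gt ht.1)] at this
  -- φ is strictly decreasing near 0+
  set φ : ℝ → ℝ := fun t => G (p + t • w) with hφ
  have hφd : ∀ t : ℝ, HasDerivAt φ (ψ t) t := by
    intro t
    have hγ : HasDerivAt (fun s : ℝ => p + s • w) w t := by
      simpa using ((hasDerivAt_id t).smul_const w).const_add p
    exact (hdiff (p + t • w)).hasFDerivAt.comp_hasDerivAt t hγ
  have hanti : StrictAntiOn φ (Set.Icc 0 (u/2)) := by
    refine strictAntiOn_of_deriv_neg (convex_Icc _ _) ?_ ?_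
    · exact (hG.continuous.comp (by continuity)).continuousOn
    · intro t ht
      rw [interior_Icc] at ht
      rw [(hφd t).deriv]
      exact hψneg t ⟨ht.1, lt_of_lt_of_le ht.2 (by linarith)⟩
  have h2 : φ (u/2) < φ 0 :=
    hanti (Set.mem_Icc.mpr ⟨le_rfl, by linarith⟩) (Set.mem_Icc.mpr ⟨by linarith, le_rfl⟩)
      (by linarith)
  have h3 : φ 0 = G p := by simp [hφ]
  exact absurd (h3 ▸ hmin (p + (u/2) • w)) (not_le.mpr h2)

/-- value of the Hessian quadratic form in the `aᵢ` direction when `aᵢ = bᵢ = 0` -/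
theorem hess_a (h : E → ℝ) (hh : ContDiff ℝ 2 h) (μ : ℝ) (a b : E) (i : Fin n)
    (ha : a i = 0) (hb : b i = 0) :
    iteratedFDeriv ℝ 2 (Fd n h μ) (a, b) (fun _ => ((EuclideanSpace.single i (1:ℝ), 0) : E × E))
      = 2 * (fderiv ℝ h (Xfun n (a, b)) (EuclideanSpace.single i (1:ℝ)) + μ) := by
  set e : E := EuclideanSpace.single i (1:ℝ) with he
  have hbr := second_slice (Fd n h μ) (contDiff_Fd h hh μ) (a, b) ((e, 0) : E × E)
  -- explicit formula for ψ
  have hψeq : (fun t : ℝ => fderiv ℝ (Fd n h μ) ((a, b) + t • ((e, 0) : E × E)) (e, 0))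
      = fun t : ℝ => 2 * t * (fderiv ℝ h (Xfun n (a, b) + t ^ 2 • e) e + μ) := by
    funext t
    have h1 : ((a, b) : E × E) + t • ((e, 0) : E × E) = (a + t • e, b) := by
      simp [Prod.ext_iff]
    rw [h1, fderiv_Fd_a h hh μ (a + t • e) b i]
    have h2 : (a + t • e) i = t := by
      simp [he, EuclideanSpace.single_apply, ha]
    have h3 : Xfun n (a + t • e, b) = Xfun n (a, b) + t ^ 2 • e := by
      ext j
      simp only [Xfun]
      by_cases hj : j = i
      · subst hj
        simp [he, Xfun, EuclideanSpace.single_apply, ha]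
        ring
      · simp [he, Xfun, EuclideanSpace.single_apply, hj]
    rw [h2, h3]
  rw [hψeq] at hbr
  -- compute the derivative of the explicit formula
  have hinner : HasDerivAt (fun t : ℝ => Xfun n (a, b) + t ^ 2 • e) 0 0 := by
    have := ((hasDerivAt_pow 2 (0:ℝ)).smul_const e).const_add (Xfun n (a, b))
    simpa using this
  have hfd1 : Differentiable ℝ (fderiv ℝ h) :=
    (hh.fderiv_right (m := 1) (by norm_num)).differentiable (by norm_num)
  have houter : HasDerivAt (fun t : ℝ => fderiv ℝ h (Xfun n (a, b) + t ^ 2 • e))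
      (fderiv ℝ (fderiv ℝ h) (Xfun n (a, b)) 0) 0 := by
    have := (hfd1 _).hasFDerivAt.comp_hasDerivAt 0 hinner
    simp only [map_zero, Function.comp_def] at this ⊢
    exact this
  have hv : HasDerivAt (fun t : ℝ => fderiv ℝ h (Xfun n (a, b) + t ^ 2 • e) e + μ)
      (0 : ℝ) 0 := by
    have := (houter.clm_apply (hasDerivAt_const (0:ℝ) e)).add_const μ
    simpa using this
  have hu : HasDerivAt (fun t : ℝ => 2 * t) 2 0 := by
    simpa using (hasDerivAt_id (0:ℝ)).const_mul 2
  have hprod := hu.mul hv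
  have hval : HasDerivAt (fun t : ℝ => 2 * t * (fderiv ℝ h (Xfun n (a, b) + t ^ 2 • e) e + μ))
      (2 * (fderiv ℝ h (Xfun n (a, b)) e + μ)) 0 := by
    refine hprod.congr_deriv ?_
    all_goals simp
    all_goals ring
  exact hbr.unique hval

/-- value of the Hessian quadratic form in the `bᵢ` direction when `aᵢ = bᵢ = 0` -/
theorem hess_b (h : E → ℝ) (hh : ContDiff ℝ 2 h) (μ : ℝ) (a b : E) (i : Fin n)
    (ha : a i = 0) (hb : b i = 0) :
    iteratedFDeriv ℝ 2 (Fd n h μ) (a, b) (fun _ => ((0, EuclideanSpace.single i (1:ℝ)) : E × E))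
      = 2 * (μ - fderiv ℝ h (Xfun n (a, b)) (EuclideanSpace.single i (1:ℝ))) := by
  set e : E := EuclideanSpace.single i (1:ℝ) with he
  have hbr := second_slice (Fd n h μ) (contDiff_Fd h hh μ) (a, b) ((0, e) : E × E)
  have hψeq : (fun t : ℝ => fderiv ℝ (Fd n h μ) ((a, b) + t • ((0, e) : E × E)) (0, e))
      = fun t : ℝ => 2 * t * (μ - fderiv ℝ h (Xfun n (a, b) - t ^ 2 • e) e) := by
    funext t
    have h1 : ((a, b) : E × E) + t • ((0, e) : E × E) = (a, b + t • e) := by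
      simp [Prod.ext_iff]
    rw [h1, fderiv_Fd_b h hh μ a (b + t • e) i]
    have h2 : (b + t • e) i = t := by
      simp [he, EuclideanSpace.single_apply, hb]
    have h3 : Xfun n (a, b + t • e) = Xfun n (a, b) - t ^ 2 • e := by
      ext j
      simp only [Xfun]
      by_cases hj : j = i
      · subst hj
        simp [he, Xfun, EuclideanSpace.single_apply, hb]
      · simp [he, Xfun, EuclideanSpace.single_apply, hj]
    rw [h2, h3]
  rw [hψeq] at hbr
  have hinner : HasDerivAt (fun t : ℝ => Xfun n (a, b) - t ^ 2 • e) 0 0 := by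
    have := ((hasDerivAt_pow 2 (0:ℝ)).smul_const e).neg.const_add (Xfun n (a, b))
    simp only [sub_eq_add_neg]
    refine this.congr_deriv (by simp)
  have hfd1 : Differentiable ℝ (fderiv ℝ h) :=
    (hh.fderiv_right (m := 1) (by norm_num)).differentiable (by norm_num)
  have houter : HasDerivAt (fun t : ℝ => fderiv ℝ h (Xfun n (a, b) - t ^ 2 • e))
      (fderiv ℝ (fderiv ℝ h) (Xfun n (a, b)) 0) 0 := by
    have := (hfd1 _).hasFDerivAt.comp_hasDerivAt 0 hinner
    simp only [map_zero, Function.comp_def] at this ⊢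
    exact this
  have hv : HasDerivAt (fun t : ℝ => μ - fderiv ℝ h (Xfun n (a, b) - t ^ 2 • e) e)
      (0 : ℝ) 0 := by
    have := (houter.clm_apply (hasDerivAt_const (0:ℝ) e)).const_sub μ
    simpa using this
  have hu : HasDerivAt (fun t : ℝ => 2 * t) 2 0 := by
    simpa using (hasDerivAt_id (0:ℝ)).const_mul 2
  have hprod := hu.mul hv
  have hval : HasDerivAt (fun t : ℝ => 2 * t * (μ - fderiv ℝ h (Xfun n (a, b) - t ^ 2 • e) e))
      (2 * (μ - fderiv ℝ h (Xfun n (a, b)) e)) 0 := by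
    refine hprod.congr_deriv ?_
    all_goals simp
    all_goals ring
  exact hbr.unique hval

/-- subgradient conditions imply global minimality for `f` -/
theorem f_global_min (h : E → ℝ) (hd : Differentiable ℝ h) (hconv : ConvexOn ℝ Set.univ h)
    (μ : ℝ) (x : E)
    (hsign : ∀ i, fderiv ℝ h x (EuclideanSpace.single i 1) * x i = -(μ * |x i|))
    (hbound : ∀ i, |fderiv ℝ h x (EuclideanSpace.single i 1)| ≤ μ) :
    ∀ y : E, h x + μ * ∑ i, |x i| ≤ h y + μ * ∑ i, |y i| := by
  intro y
  have hgi := grad_ineq h hd hconv x y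
  rw [clm_decomp] at hgi
  have hterm : ∀ i ∈ Finset.univ, (0:ℝ) ≤
      (fderiv ℝ h x (EuclideanSpace.single i 1) * y i + μ * |y i|)
      - (fderiv ℝ h x (EuclideanSpace.single i 1) * x i + μ * |x i|) := by
    intro i _
    rw [hsign i]
    have h1 : |fderiv ℝ h x (EuclideanSpace.single i 1) * y i| ≤ μ * |y i| := by
      rw [abs_mul]
      exact mul_le_mul_of_nonneg_right (hbound i) (abs_nonneg _)
    have h2 := neg_abs_le (fderiv ℝ h x (EuclideanSpace.single i 1) * y i)
    linarith
  have hsum := Finset.sum_nonneg hterm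
  rw [Finset.sum_sub_distrib, Finset.sum_add_distrib, Finset.sum_add_distrib,
    ← Finset.mul_sum, ← Finset.mul_sum] at hsum
  have hyx : ∀ i, (y - x) i = y i - x i := fun i => rfl
  have hexp : ∑ i, (y - x) i * fderiv ℝ h x (EuclideanSpace.single i 1)
      = ∑ i, fderiv ℝ h x (EuclideanSpace.single i 1) * y i
        - ∑ i, fderiv ℝ h x (EuclideanSpace.single i 1) * x i := by
    rw [← Finset.sum_sub_distrib]
    exact Finset.sum_congr rfl fun i _ => by rw [hyx i]; ring
  rw [hexp] at hgi
  linarith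

/-- the set of "stationary" base points -/
def StatSet (n : ℕ) (h : EuclideanSpace ℝ (Fin n) → ℝ) (μ : ℝ) :
    Set (EuclideanSpace ℝ (Fin n)) :=
  {x | ∀ i, (0 < x i → fderiv ℝ h x (EuclideanSpace.single i 1) = -μ) ∧
       (x i < 0 → fderiv ℝ h x (EuclideanSpace.single i 1) = μ)}

theorem grads_finite (h : E → ℝ) (hd : Differentiable ℝ h) (hconv : ConvexOn ℝ Set.univ h)
    (μ : ℝ) : Set.Finite ((fun x => fderiv ℝ h x) '' StatSet n h μ) := by
  classical
  set τ : E → (Fin n → Fin 3) := fun x i =>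
    if 0 < x i then 0 else if x i < 0 then 1 else 2 with hτ
  have hcover : (fun x => fderiv ℝ h x) '' StatSet n h μ
      = ⋃ σ : Fin n → Fin 3, (fun x => fderiv ℝ h x) '' (StatSet n h μ ∩ τ ⁻¹' {σ}) := by
    ext L
    simp only [Set.mem_iUnion, Set.mem_image]
    constructor
    · rintro ⟨x, hx, rfl⟩
      exact ⟨τ x, x, ⟨hx, rfl⟩, rfl⟩
    · rintro ⟨σ, x, ⟨hx, _⟩, rfl⟩
      exact ⟨x, hx, rfl⟩
  rw [hcover]
  refine Set.finite_iUnion fun σ => Set.Subsingleton.finite ?_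
  rintro L1 ⟨x, ⟨hx, hxσ⟩, rfl⟩ L2 ⟨y, ⟨hy, hyσ⟩, rfl⟩
  have hσ : τ x = τ y := by
    rw [Set.mem_preimage, Set.mem_singleton_iff] at hxσ hyσ
    rw [hxσ, hyσ]
  refine fderiv_eq_of_flat h hd hconv x y ?_
  rw [clm_decomp (fderiv ℝ h x), clm_decomp (fderiv ℝ h y)]
  refine Finset.sum_congr rfl fun i _ => ?_
  have hσi : τ x i = τ y i := by rw [hσ]
  rcases lt_trichotomy (x i) 0 with hx1 | hx1 | hx1 <;>
    rcases lt_trichotomy (y i) 0 with hy1 | hy1 | hy1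
  · rw [(hx i).2 hx1, (hy i).2 hy1]
  · exfalso
    have e1 : τ x i = 1 := by simp [hτ, hx1, not_lt.2 hx1.le]
    have e2 : τ y i = 2 := by simp [hτ, hy1]
    rw [e1, e2] at hσi
    exact absurd hσi (by decide)
  · exfalso
    have e1 : τ x i = 1 := by simp [hτ, hx1, not_lt.2 hx1.le]
    have e2 : τ y i = 0 := by simp [hτ, hy1]
    rw [e1, e2] at hσi
    exact absurd hσi (by decide)
  · exfalso
    have e1 : τ x i = 2 := by simp [hτ, hx1]
    have e2 : τ y i = 1 := by simp [hτ, hy1, not_lt.2 hy1.le]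
    rw [e1, e2] at hσi
    exact absurd hσi (by decide)
  · rw [show (y - x) i = y i - x i from rfl, hx1, hy1]
    simp
  · exfalso
    have e1 : τ x i = 2 := by simp [hτ, hx1]
    have e2 : τ y i = 0 := by simp [hτ, hy1]
    rw [e1, e2] at hσi
    exact absurd hσi (by decide)
  · exfalso
    have e1 : τ x i = 0 := by simp [hτ, hx1]
    have e2 : τ y i = 1 := by simp [hτ, hy1, not_lt.2 hy1.le]
    rw [e1, e2] at hσi
    exact absurd hσi (by decide)
  · exfalso
    have e1 : τ x i = 0 := by simp [hτ, hx1]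
    have e2 : τ y i = 2 := by simp [hτ, hy1]
    rw [e1, e2] at hσi
    exact absurd hσi (by decide)
  · rw [(hx i).1 hx1, (hy i).1 hy1]

/-- the uniform gap `δ` -/
theorem exists_delta (h : (EuclideanSpace ℝ (Fin n)) → ℝ) (hd : Differentiable ℝ h)
    (hconv : ConvexOn ℝ Set.univ h) (μ : ℝ) :
    ∃ δ > (0:ℝ), ∀ x ∈ StatSet n h μ, ∀ i : Fin n,
      μ < |fderiv ℝ h x (EuclideanSpace.single i 1)| →
      μ + δ ≤ |fderiv ℝ h x (EuclideanSpace.single i 1)| := by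
  classical
  have hV := grads_finite h hd hconv μ
  have hW : Set.Finite ((fun q : ((EuclideanSpace ℝ (Fin n)) →L[ℝ] ℝ) × Fin n =>
      |q.1 (EuclideanSpace.single q.2 1)|) ''
      (((fun x => fderiv ℝ h x) '' StatSet n h μ) ×ˢ (Set.univ : Set (Fin n)))) :=
    Set.Finite.image _ (hV.prod (Set.finite_univ))
  set W := _ ∩ Set.Ioi μ with hWdef
  have hWfin : Set.Finite W := Set.Finite.inter_of_left hW _
  by_cases hne : W.Nonempty
  · set Wf := hWfin.toFinset with hWf
    have hWfne : Wf.Nonempty := by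
      rwa [hWf, Set.Finite.toFinset_nonempty]
    refine ⟨Wf.min' hWfne - μ, ?_, ?_⟩
    · have : Wf.min' hWfne ∈ Wf := Wf.min'_mem hWfne
      rw [Set.Finite.mem_toFinset] at this
      have := this.2
      simp only [Set.mem_Ioi] at this
      linarith
    · intro x hx i hgi
      have hmem : |fderiv ℝ h x (EuclideanSpace.single i 1)| ∈ Wf := by
        rw [Set.Finite.mem_toFinset]
        refine ⟨⟨(fderiv ℝ h x, i), ⟨⟨x, hx, rfl⟩, Set.mem_univ i⟩, rfl⟩, hgi⟩
      have := Wf.min'_le _ hmem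
      linarith
  · refine ⟨1, one_pos, ?_⟩
    intro x hx i hgi
    exfalso
    exact hne ⟨|fderiv ℝ h x (EuclideanSpace.single i 1)|,
      ⟨(fderiv ℝ h x, i), ⟨⟨x, hx, rfl⟩, Set.mem_univ i⟩, rfl⟩, hgi⟩

end StrictSaddleAux

section Helpers

lemma abs_sub_sq_le (r s : ℝ) : |r ^ 2 - s ^ 2| ≤ r ^ 2 + s ^ 2 :=
  abs_le.mpr ⟨by nlinarith [sq_nonneg r, sq_nonneg s], by nlinarith [sq_nonneg r, sq_nonneg s]⟩

lemma min_sq_zero_iff (r s : ℝ) : min (r ^ 2) (s ^ 2) = 0 ↔ r ^ 2 + s ^ 2 = |r ^ 2 - s ^ 2| := by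
  constructor
  · intro hmin
    rcases min_eq_iff.mp hmin with ⟨h1, h2⟩ | ⟨h1, h2⟩
    · rw [h1]
      rw [h1] at h2
      rw [abs_of_nonpos (by linarith)]
      ring
    · rw [h1]
      rw [h1] at h2
      rw [abs_of_nonneg (by linarith)]
      ring
  · intro heq
    rcases le_total (r ^ 2) (s ^ 2) with hle | hle
    · rw [min_eq_left hle]
      rw [abs_of_nonpos (by linarith)] at heq
      nlinarith [sq_nonneg r]
    · rw [min_eq_right hle]
      rw [abs_of_nonneg (by linarith)] at heq
      nlinarith [sq_nonneg s]

end Helpers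

set_option maxHeartbeats 1000000 in
/-- **strict saddle property.** If `h` is convex, there exists `δ > 0`
such that for every `(a,b)`, the following are equivalent:
(i) `∇F(a,b) = 0` and `λ_min(∇²F(a,b)) > −δ`;
(ii) `a² − b²` is a global minimizer of `f` and `min{aᵢ², bᵢ²} = 0` for all `i`;
(iii) `(a,b)` is a global minimizer of `F`;
(iv) `(a,b)` is a second-order stationary point of `F`. -/
theorem stmt9 (n : ℕ) (hn : 0 < n)
    (h : EuclideanSpace ℝ (Fin n) → ℝ) (hh : ContDiff ℝ 2 h)
    (hconv : ConvexOn ℝ Set.univ h)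
    (μ : ℝ) (hμ : 0 < μ)
    (f : EuclideanSpace ℝ (Fin n) → ℝ)
    (hf : f = fun x => h x + μ * ∑ i, |x i|)
    (F : EuclideanSpace ℝ (Fin n) × EuclideanSpace ℝ (Fin n) → ℝ)
    (hF : F = fun p =>
      h (WithLp.toLp 2 (fun i => p.1 i ^ 2 - p.2 i ^ 2)) + μ * ∑ i, (p.1 i ^ 2 + p.2 i ^ 2)) :
    ∃ δ > (0 : ℝ), ∀ a b : EuclideanSpace ℝ (Fin n),
      (((fderiv ℝ F (a, b) = 0 ∧
          ∀ u v : EuclideanSpace ℝ (Fin n), (u, v) ≠ (0, 0) →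
            -δ * (‖u‖ ^ 2 + ‖v‖ ^ 2) < iteratedFDeriv ℝ 2 F (a, b) (fun _ => (u, v))) ↔
        ((∀ x, f (WithLp.toLp 2 (fun i => a i ^ 2 - b i ^ 2)) ≤ f x) ∧
          ∀ i : Fin n, min (a i ^ 2) (b i ^ 2) = 0)) ∧
      (((∀ x, f (WithLp.toLp 2 (fun i => a i ^ 2 - b i ^ 2)) ≤ f x) ∧
          ∀ i : Fin n, min (a i ^ 2) (b i ^ 2) = 0) ↔
        (∀ p, F (a, b) ≤ F p)) ∧
      ((∀ p, F (a, b) ≤ F p) ↔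
        (fderiv ℝ F (a, b) = 0 ∧
          ∀ w : EuclideanSpace ℝ (Fin n) × EuclideanSpace ℝ (Fin n),
            0 ≤ iteratedFDeriv ℝ 2 F (a, b) (fun _ => w)))) := by
  classical
  have hd : Differentiable ℝ h := hh.differentiable (by norm_num)
  have hF' : F = Fd n h μ := hF
  have hfz : ∀ z : EuclideanSpace ℝ (Fin n), f z = h z + μ * ∑ i, |z i| := by
    intro z; rw [hf]
  obtain ⟨δ, hδpos, hδ⟩ := exists_delta h hd hconv μ
  refine ⟨δ, hδpos, ?_⟩
  intro a b
  rw [hF']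
  set x : EuclideanSpace ℝ (Fin n) := Xfun n (a, b) with hxdef
  have hxfun : (WithLp.toLp 2 (fun i => a i ^ 2 - b i ^ 2) : EuclideanSpace ℝ (Fin n)) = x := rfl
  set g : Fin n → ℝ := fun i => fderiv ℝ h x (EuclideanSpace.single i 1) with hgdef
  have hxi : ∀ i, x i = a i ^ 2 - b i ^ 2 := fun i => rfl
  -- stationarity consequences
  have hstat : fderiv ℝ (Fd n h μ) (a, b) = 0 →
      ∀ i, a i * (g i + μ) = 0 ∧ b i * (μ - g i) = 0 := by
    intro h0 i
    constructor
    · have := fderiv_Fd_a h hh μ a b i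
      rw [h0] at this
      simp only [ContinuousLinearMap.zero_apply] at this
      have h2 : 2 * a i * (g i + μ) = 0 := this.symm
      nlinarith [h2]
    · have := fderiv_Fd_b h hh μ a b i
      rw [h0] at this
      simp only [ContinuousLinearMap.zero_apply] at this
      have h2 : 2 * b i * (μ - g i) = 0 := this.symm
      nlinarith [h2]
  -- complementarity from stationarity
  have hcomp_of_stat : (∀ i, a i * (g i + μ) = 0 ∧ b i * (μ - g i) = 0) →
      ∀ i, min (a i ^ 2) (b i ^ 2) = 0 := by
    intro hs i
    by_contra hne
    have ha : a i ≠ 0 := by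
      intro h0
      exact hne (by rw [h0]; simp [min_eq_left, sq_nonneg])
    have hb : b i ≠ 0 := by
      intro h0
      exact hne (by rw [h0]; simp [sq_nonneg])
    have h1 : g i + μ = 0 := by
      rcases mul_eq_zero.mp (hs i).1 with hc | hc
      · exact absurd hc ha
      · exact hc
    have h2 : μ - g i = 0 := by
      rcases mul_eq_zero.mp (hs i).2 with hc | hc
      · exact absurd hc hb
      · exact hc
    linarith
  -- sign conditions from stationarity
  have hsign_of_stat : (∀ i, a i * (g i + μ) = 0 ∧ b i * (μ - g i) = 0) →
      ∀ i, (0 < x i → g i = -μ) ∧ (x i < 0 → g i = μ) := by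
    intro hs i
    constructor
    · intro hx
      have ha : a i ≠ 0 := by
        intro h0
        rw [hxi i, h0] at hx
        nlinarith [sq_nonneg (b i)]
      rcases mul_eq_zero.mp (hs i).1 with hc | hc
      · exact absurd hc ha
      · linarith
    · intro hx
      have hb : b i ≠ 0 := by
        intro h0
        rw [hxi i, h0] at hx
        nlinarith [sq_nonneg (a i)]
      rcases mul_eq_zero.mp (hs i).2 with hc | hc
      · exact absurd hc hb
      · linarith
  have hxStat_of_stat : (∀ i, a i * (g i + μ) = 0 ∧ b i * (μ - g i) = 0) →
      x ∈ StatSet n h μ := by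
    intro hs
    intro i
    exact hsign_of_stat hs i
  -- the product sign condition
  have hprod_of_stat : (∀ i, a i * (g i + μ) = 0 ∧ b i * (μ - g i) = 0) →
      ∀ i, g i * x i = -(μ * |x i|) := by
    intro hs i
    rcases lt_trichotomy (x i) 0 with hx | hx | hx
    · rw [(hsign_of_stat hs i).2 hx, abs_of_neg hx]
      ring
    · rw [hx]
      simp
    · rw [(hsign_of_stat hs i).1 hx, abs_of_pos hx]
      ring
  -- (ii) → (iii)
  have h23 : ((∀ x', f (WithLp.toLp 2 (fun i => a i ^ 2 - b i ^ 2)) ≤ f x') ∧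
      ∀ i : Fin n, min (a i ^ 2) (b i ^ 2) = 0) → ∀ p, Fd n h μ (a, b) ≤ Fd n h μ p := by
    rintro ⟨hfmin, hcomp⟩ p
    have e1 : Fd n h μ (a, b) = f x := by
      rw [hfz x]
      simp only [Fd]
      congr 1
      congr 1
      refine Finset.sum_congr rfl fun i _ => ?_
      rw [hxi i, ← (min_sq_zero_iff (a i) (b i)).mp (hcomp i)]
    have e2 : f x ≤ f (Xfun n p) := hxfun ▸ hfmin (Xfun n p)
    have e3 : f (Xfun n p) ≤ Fd n h μ p := by
      rw [hfz]
      simp only [Fd]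
      have : ∑ i, |Xfun n p i| ≤ ∑ i, (p.1 i ^ 2 + p.2 i ^ 2) :=
        Finset.sum_le_sum fun i _ => abs_sub_sq_le (p.1 i) (p.2 i)
      have hμ' : μ * ∑ i, |Xfun n p i| ≤ μ * ∑ i, (p.1 i ^ 2 + p.2 i ^ 2) :=
        mul_le_mul_of_nonneg_left this hμ.le
      simp only [Xfun] at hμ' ⊢
      linarith
    rw [e1]
    exact le_trans (le_trans e2 e3) le_rfl
  -- (iii) → (ii)
  have h32 : (∀ p, Fd n h μ (a, b) ≤ Fd n h μ p) → ((∀ x', f (WithLp.toLp 2 (fun i => a i ^ 2 - b i ^ 2)) ≤ f x') ∧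
      ∀ i : Fin n, min (a i ^ 2) (b i ^ 2) = 0) := by
    intro hmin
    -- F(a,b) ≤ f y for every y
    have claim1 : ∀ y : EuclideanSpace ℝ (Fin n), Fd n h μ (a, b) ≤ f y := by
      intro y
      set p : EuclideanSpace ℝ (Fin n) × EuclideanSpace ℝ (Fin n) :=
        (WithLp.toLp 2 (fun i => Real.sqrt (max (y i) 0)), WithLp.toLp 2 (fun i => Real.sqrt (max (-(y i)) 0))) with hp
      have hXp : Xfun n p = y := by
        ext j
        simp only [Xfun, hp]
        rw [Real.sq_sqrt (le_max_right _ _), Real.sq_sqrt (le_max_right _ _)]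
        rcases le_total (y j) 0 with hy | hy
        · rw [max_eq_right hy, max_eq_left (by linarith)]
          ring
        · rw [max_eq_left hy, max_eq_right (by linarith)]
          ring
      have hsum : ∑ i, (p.1 i ^ 2 + p.2 i ^ 2) = ∑ i, |y i| := by
        refine Finset.sum_congr rfl fun j _ => ?_
        simp only [hp]
        rw [Real.sq_sqrt (le_max_right _ _), Real.sq_sqrt (le_max_right _ _)]
        rcases le_total (y j) 0 with hy | hy
        · rw [max_eq_right hy, max_eq_left (by linarith), abs_of_nonpos hy]
          ring
        · rw [max_eq_left hy, max_eq_right (by linarith), abs_of_nonneg hy]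
          ring
      have : Fd n h μ p = f y := by
        rw [hfz]
        simp only [Fd]
        rw [hXp, hsum]
      rw [← this]
      exact hmin p
    have claim2 : f x ≤ Fd n h μ (a, b) := by
      rw [hfz]
      simp only [Fd]
      have : ∑ i, |x i| ≤ ∑ i, (a i ^ 2 + b i ^ 2) := by
        refine Finset.sum_le_sum fun i _ => ?_
        rw [hxi i]
        exact abs_sub_sq_le (a i) (b i)
      have hμ' : μ * ∑ i, |x i| ≤ μ * ∑ i, (a i ^ 2 + b i ^ 2) :=
        mul_le_mul_of_nonneg_left this hμ.le
      linarith
    constructor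
    · intro y
      rw [hxfun]
      exact le_trans claim2 (claim1 y)
    · -- complementarity
      have hEq : Fd n h μ (a, b) = f x := le_antisymm (claim1 x) claim2
      rw [hfz] at hEq
      simp only [Fd] at hEq
      have hsum : ∑ i, (a i ^ 2 + b i ^ 2) = ∑ i, |x i| := by
        have := sub_eq_zero.mpr hEq
        have h2 : μ * (∑ i, (a i ^ 2 + b i ^ 2)) = μ * (∑ i, |x i|) := by linarith
        exact mul_left_cancel₀ (ne_of_gt hμ) h2
      have hzero : ∑ i, ((a i ^ 2 + b i ^ 2) - |x i|) = 0 := by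
        rw [Finset.sum_sub_distrib, hsum]
        ring
      have hnn : ∀ i ∈ Finset.univ, (0:ℝ) ≤ (a i ^ 2 + b i ^ 2) - |x i| := by
        intro i _
        rw [hxi i]
        have := abs_sub_sq_le (a i) (b i)
        linarith
      have heach := (Finset.sum_eq_zero_iff_of_nonneg hnn).mp hzero
      intro i
      have := heach i (Finset.mem_univ i)
      rw [min_sq_zero_iff]
      rw [hxi i] at this
      linarith [this]
  -- (iii) → (iv)
  have h34 : (∀ p, Fd n h μ (a, b) ≤ Fd n h μ p) →
      (fderiv ℝ (Fd n h μ) (a, b) = 0 ∧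
        ∀ w : EuclideanSpace ℝ (Fin n) × EuclideanSpace ℝ (Fin n),
          0 ≤ iteratedFDeriv ℝ 2 (Fd n h μ) (a, b) (fun _ => w)) := by
    intro hmin
    refine ⟨IsLocalMin.fderiv_eq_zero (Filter.Eventually.of_forall hmin), ?_⟩
    exact fun w => second_order_nonneg (Fd n h μ) (contDiff_Fd h hh μ) (a, b) hmin w
  -- (iv) → (ii)
  have h42 : (fderiv ℝ (Fd n h μ) (a, b) = 0 ∧
      ∀ w : EuclideanSpace ℝ (Fin n) × EuclideanSpace ℝ (Fin n),
        0 ≤ iteratedFDeriv ℝ 2 (Fd n h μ) (a, b) (fun _ => w)) →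
      ((∀ x', f (WithLp.toLp 2 (fun i => a i ^ 2 - b i ^ 2)) ≤ f x') ∧
        ∀ i : Fin n, min (a i ^ 2) (b i ^ 2) = 0) := by
    rintro ⟨h0, hQ⟩
    have hs := hstat h0
    have hcomp := hcomp_of_stat hs
    have hbound : ∀ i, |g i| ≤ μ := by
      intro i
      rcases lt_trichotomy (x i) 0 with hx | hx | hx
      · rw [(hsign_of_stat hs i).2 hx, abs_of_pos hμ]
      · -- a i = b i = 0
        have hab : a i = 0 ∧ b i = 0 := by
          have h1 : a i ^ 2 = b i ^ 2 := by
            have := hxi i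
            rw [hx] at this
            linarith [this.symm]
          rcases min_eq_iff.mp (hcomp i) with ⟨h2, _⟩ | ⟨h2, _⟩
          · exact ⟨pow_eq_zero_iff (by norm_num) |>.mp h2,
              pow_eq_zero_iff (n := 2) (by norm_num) |>.mp (h1 ▸ h2)⟩
          · exact ⟨pow_eq_zero_iff (n := 2) (by norm_num) |>.mp (h1.symm ▸ h2),
              pow_eq_zero_iff (by norm_num) |>.mp h2⟩
        have hQa := hQ ((EuclideanSpace.single i 1, 0))
        rw [hess_a h hh μ a b i hab.1 hab.2] at hQa
        have hQb := hQ ((0, EuclideanSpace.single i 1))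
        rw [hess_b h hh μ a b i hab.1 hab.2] at hQb
        exact abs_le.mpr ⟨by linarith, by linarith⟩
      · rw [(hsign_of_stat hs i).1 hx, abs_neg, abs_of_pos hμ]
    have hmin := f_global_min h hd hconv μ x (hprod_of_stat hs) hbound
    refine ⟨?_, hcomp⟩
    intro y
    rw [hxfun, hfz, hfz]
    exact hmin y
  -- (iv) → (i) quadratic part trivial; (ii) → (i)
  have h21 : ((∀ x', f (WithLp.toLp 2 (fun i => a i ^ 2 - b i ^ 2)) ≤ f x') ∧
      ∀ i : Fin n, min (a i ^ 2) (b i ^ 2) = 0) →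
      (fderiv ℝ (Fd n h μ) (a, b) = 0 ∧
        ∀ u v : EuclideanSpace ℝ (Fin n), (u, v) ≠ (0, 0) →
          -δ * (‖u‖ ^ 2 + ‖v‖ ^ 2) < iteratedFDeriv ℝ 2 (Fd n h μ) (a, b) (fun _ => (u, v))) := by
    intro h2
    obtain ⟨h0, hQ⟩ := h34 (h23 h2)
    refine ⟨h0, ?_⟩
    intro u v huv
    have hpos : 0 < ‖u‖ ^ 2 + ‖v‖ ^ 2 := by
      have : u ≠ 0 ∨ v ≠ 0 := by
        by_contra hc
        push_neg at hc
        exact huv (by rw [hc.1, hc.2])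
      rcases this with hu | hv
      · have := pow_pos (norm_pos_iff.mpr hu) 2
        nlinarith [sq_nonneg ‖v‖]
      · have := pow_pos (norm_pos_iff.mpr hv) 2
        nlinarith [sq_nonneg ‖u‖]
    calc -δ * (‖u‖ ^ 2 + ‖v‖ ^ 2) < 0 := mul_neg_of_neg_of_pos (by linarith) hpos
    _ ≤ _ := hQ (u, v)
  -- (i) → (ii)
  have h12 : (fderiv ℝ (Fd n h μ) (a, b) = 0 ∧
      ∀ u v : EuclideanSpace ℝ (Fin n), (u, v) ≠ (0, 0) →
        -δ * (‖u‖ ^ 2 + ‖v‖ ^ 2) < iteratedFDeriv ℝ 2 (Fd n h μ) (a, b) (fun _ => (u, v))) →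
      ((∀ x', f (WithLp.toLp 2 (fun i => a i ^ 2 - b i ^ 2)) ≤ f x') ∧
        ∀ i : Fin n, min (a i ^ 2) (b i ^ 2) = 0) := by
    rintro ⟨h0, hQ⟩
    have hs := hstat h0
    have hcomp := hcomp_of_stat hs
    have hbound : ∀ i, |g i| ≤ μ := by
      intro i
      by_contra hgt
      push_neg at hgt
      have hxStat := hxStat_of_stat hs
      have hgap := hδ x hxStat i hgt
      -- also x i = 0 in this case, so a i = b i = 0
      have hx0 : x i = 0 := by
        rcases lt_trichotomy (x i) 0 with hx | hx | hx
        · rw [(hsign_of_stat hs i).2 hx] at hgt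
          rw [abs_of_pos hμ] at hgt
          linarith
        · exact hx
        · rw [(hsign_of_stat hs i).1 hx, abs_neg, abs_of_pos hμ] at hgt
          linarith
      have hab : a i = 0 ∧ b i = 0 := by
        have h1 : a i ^ 2 = b i ^ 2 := by
          have := hxi i
          rw [hx0] at this
          linarith [this.symm]
        rcases min_eq_iff.mp (hcomp i) with ⟨h2, _⟩ | ⟨h2, _⟩
        · exact ⟨pow_eq_zero_iff (by norm_num) |>.mp h2,
            pow_eq_zero_iff (n := 2) (by norm_num) |>.mp (h1 ▸ h2)⟩
        · exact ⟨pow_eq_zero_iff (n := 2) (by norm_num) |>.mp (h1.symm ▸ h2),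
            pow_eq_zero_iff (by norm_num) |>.mp h2⟩
      have hne_a : ((EuclideanSpace.single i 1 : EuclideanSpace ℝ (Fin n)),
          (0 : EuclideanSpace ℝ (Fin n))) ≠ (0, 0) := by
        intro hc
        have : (EuclideanSpace.single i 1 : EuclideanSpace ℝ (Fin n)) = 0 :=
          (Prod.mk.injEq _ _ _ _ ▸ hc).1
        have h1 : (EuclideanSpace.single i (1:ℝ)) i = 0 := by rw [this]; rfl
        rw [EuclideanSpace.single_apply] at h1
        simp at h1
      have hne_b : ((0 : EuclideanSpace ℝ (Fin n)),
          (EuclideanSpace.single i 1 : EuclideanSpace ℝ (Fin n))) ≠ (0, 0) := by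
        intro hc
        have : (EuclideanSpace.single i 1 : EuclideanSpace ℝ (Fin n)) = 0 :=
          (Prod.mk.injEq _ _ _ _ ▸ hc).2
        have h1 : (EuclideanSpace.single i (1:ℝ)) i = 0 := by rw [this]; rfl
        rw [EuclideanSpace.single_apply] at h1
        simp at h1
      have hnorm : ‖(EuclideanSpace.single i 1 : EuclideanSpace ℝ (Fin n))‖ ^ 2
          + ‖(0 : EuclideanSpace ℝ (Fin n))‖ ^ 2 = 1 := by
        rw [EuclideanSpace.norm_single, norm_zero]
        norm_num
      have hQa := hQ (EuclideanSpace.single i 1) 0 hne_a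
      rw [hess_a h hh μ a b i hab.1 hab.2, hnorm] at hQa
      have hQb := hQ 0 (EuclideanSpace.single i 1) hne_b
      rw [hess_b h hh μ a b i hab.1 hab.2] at hQb
      rw [show ‖(0 : EuclideanSpace ℝ (Fin n))‖ ^ 2
          + ‖(EuclideanSpace.single i 1 : EuclideanSpace ℝ (Fin n))‖ ^ 2 = 1 by
        rw [EuclideanSpace.norm_single, norm_zero]; norm_num] at hQb
      -- hQa : -δ * 1 < 2 * (g i + μ), hQb : -δ * 1 < 2 * (μ - g i)
      -- so |g i| < μ + δ/2 < μ + δ ≤ |g i|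
      rcases abs_cases (g i) with ⟨he, _⟩ | ⟨he, _⟩
      · rw [he] at hgap
        linarith
      · rw [he] at hgap
        linarith
    have hmin := f_global_min h hd hconv μ x (hprod_of_stat hs) hbound
    refine ⟨?_, hcomp⟩
    intro y
    rw [hxfun, hfz, hfz]
    exact hmin y
  exact ⟨⟨h12, h21⟩, ⟨h23, h32⟩, ⟨h34, fun p4 => h23 (h42 p4)⟩⟩
end
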